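/- arXiv:2507.04058 — 3 statements merged into one kernel-verified Lean document; each statement's English description precedes it below -/
import Mathlib

section
/- Let Ω, M, N be measurable spaces, let μ be a probability measure on Ω, let f : Ω → M → N be such that the uncurried map (ω, x) ↦ f ω x is measurable, and let ν be a probability measure on M. Define the mean push-forward μ∗ν = ∫ (f ω)_*ν dμ(ω) (the mixture of the pushforward measures). Then for every probability measure ν′ on N, ∫ d_KL((f ω)_*ν ∥ ν′) dμ(ω) ≥ ∫ d_KL((f ω)_*ν ∥ μ∗ν) dμ(ω). That is, among all probability measures ν′ on N, the mean relative entropy Φ_μ(ν|ν′) = ∫ d_KL((f ω)_*ν ∥ ν′) dμ(ω) is minimized by ν′ = μ∗ν. -/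
open MeasureTheory ProbabilityTheory
open scoped ENNReal NNReal

namespace RMP

open scoped Classical in
/-- The Kullback–Leibler divergence `d_KL(ρ ∥ ρ')`, valued in `ℝ≥0∞`: equal to
`∫ log (dρ/dρ') dρ` when `ρ ≪ ρ'` (and the log-likelihood ratio is `ρ`-integrable),
and `+∞` otherwise. -/
noncomputable def klDiv {α : Type*} [MeasurableSpace α] (ρ ρ' : Measure α) : ℝ≥0∞ :=
  if ρ ≪ ρ' ∧ Integrable (fun x => Real.log (ρ.rnDeriv ρ' x).toReal) ρ then
    ENNReal.ofReal (∫ x, Real.log (ρ.rnDeriv ρ' x).toReal ∂ρ)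
  else ⊤

/-- The mean push-forward `μ ∗ ν = ∫ (f ω)_* ν dμ(ω)`. -/
noncomputable def mpush {Ω M N : Type*} [MeasurableSpace Ω] [MeasurableSpace M] [MeasurableSpace N]
    (μ : Measure Ω) (f : Ω → M → N) (ν : Measure M) : Measure N :=
  μ.bind fun ω => ν.map (f ω)

/-- The mean relative entropy `Φ_μ(ν | ν') = ∫ d_KL((f ω)_* ν ∥ ν') dμ(ω)`. -/
noncomputable def meanRelEnt {Ω M N : Type*} [MeasurableSpace Ω] [MeasurableSpace M]
    [MeasurableSpace N] (μ : Measure Ω) (f : Ω → M → N) (ν : Measure M) (ν' : Measure N) :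
    ℝ≥0∞ :=
  ∫⁻ ω, klDiv (ν.map (f ω)) ν' ∂μ

/-- The Furstenberg entropy `Φ_μ(ν) = Φ_μ(ν | μ ∗ ν)`. -/
noncomputable def furstEnt {Ω M N : Type*} [MeasurableSpace Ω] [MeasurableSpace M]
    [MeasurableSpace N] (μ : Measure Ω) (f : Ω → M → N) (ν : Measure M) : ℝ≥0∞ :=
  meanRelEnt μ f ν (mpush μ f ν)

/-- The push-forward entropy `h(μ) = inf_ν Φ_μ(ν)`, the infimum being over all Borel
probability measures `ν` on `M`. -/
noncomputable def pushEnt {Ω M N : Type*} [MeasurableSpace Ω] [MeasurableSpace M]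
    [MeasurableSpace N] (μ : Measure Ω) (f : Ω → M → N) : ℝ≥0∞ :=
  ⨅ ν : ProbabilityMeasure M, furstEnt μ f (ν : Measure M)

end RMP

open Real
section Aux


variable {α : Type*} [MeasurableSpace α] {ρ σ : Measure α}

lemma lintegral_inv_rnDeriv_le [SigmaFinite ρ] [SigmaFinite σ] (hac : ρ ≪ σ) :
    ∫⁻ x, (ρ.rnDeriv σ x)⁻¹ ∂ρ ≤ σ Set.univ := by
  have hwd := Measure.withDensity_rnDeriv_eq ρ σ hac
  calc ∫⁻ x, (ρ.rnDeriv σ x)⁻¹ ∂ρ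
      = ∫⁻ x, (ρ.rnDeriv σ x)⁻¹ ∂(σ.withDensity (ρ.rnDeriv σ)) := by rw [hwd]
    _ = ∫⁻ x, (ρ.rnDeriv σ * fun x => (ρ.rnDeriv σ x)⁻¹) x ∂σ :=
        lintegral_withDensity_eq_lintegral_mul σ (Measure.measurable_rnDeriv ρ σ)
          (Measure.measurable_rnDeriv ρ σ).inv
    _ ≤ ∫⁻ _, 1 ∂σ := lintegral_mono fun x => ENNReal.mul_inv_le_one _
    _ = σ Set.univ := lintegral_one

lemma lintegral_ofReal_neg_llr_le [SigmaFinite ρ] [SigmaFinite σ] (hac : ρ ≪ σ) :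
    ∫⁻ x, ENNReal.ofReal (max (- llr ρ σ x) 0) ∂ρ ≤ σ Set.univ := by
  refine le_trans (lintegral_mono_ae ?_) (lintegral_inv_rnDeriv_le hac)
  filter_upwards [Measure.rnDeriv_pos hac,
    (Measure.rnDeriv_lt_top ρ σ).filter_mono hac.ae_le] with x hpos hlt
  have ht : 0 < (ρ.rnDeriv σ x).toReal := ENNReal.toReal_pos hpos.ne' hlt.ne
  rcases le_or_gt 0 (llr ρ σ x) with h | h
  · simp [max_eq_right (neg_nonpos.mpr h)]
  · have hmax : max (- llr ρ σ x) 0 = - llr ρ σ x := max_eq_left (le_of_lt (neg_pos.mpr h))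
    rw [hmax]
    have hlog : - llr ρ σ x ≤ ((ρ.rnDeriv σ x).toReal)⁻¹ := by
      have := Real.log_le_sub_one_of_pos (inv_pos.mpr ht)
      rw [Real.log_inv] at this
      have : - Real.log ((ρ.rnDeriv σ x).toReal) ≤ ((ρ.rnDeriv σ x).toReal)⁻¹ - 1 := this
      have hinv : (0:ℝ) < ((ρ.rnDeriv σ x).toReal)⁻¹ := inv_pos.mpr ht
      simp only [llr]
      linarith
    calc ENNReal.ofReal (- llr ρ σ x) ≤ ENNReal.ofReal (((ρ.rnDeriv σ x).toReal)⁻¹) :=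
          ENNReal.ofReal_le_ofReal hlog
      _ = (ENNReal.ofReal ((ρ.rnDeriv σ x).toReal))⁻¹ := ENNReal.ofReal_inv_of_pos ht
      _ = (ρ.rnDeriv σ x)⁻¹ := by rw [ENNReal.ofReal_toReal hlt.ne]

lemma integral_llr_nonneg' [IsProbabilityMeasure ρ] [IsProbabilityMeasure σ]
    (hac : ρ ≪ σ) (hint : Integrable (llr ρ σ) ρ) : 0 ≤ ∫ x, llr ρ σ x ∂ρ := by
  set u : α → ℝ := fun x => ((ρ.rnDeriv σ x).toReal)⁻¹ with hu
  have hu_meas : Measurable u := (Measure.measurable_rnDeriv ρ σ).ennreal_toReal.inv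
  have hu_nonneg : 0 ≤ᵐ[ρ] u := ae_of_all _ fun x => inv_nonneg.mpr ENNReal.toReal_nonneg
  have h_ofReal : ∀ᵐ x ∂ρ, ENNReal.ofReal (u x) = (ρ.rnDeriv σ x)⁻¹ := by
    filter_upwards [Measure.rnDeriv_pos hac,
      (Measure.rnDeriv_lt_top ρ σ).filter_mono hac.ae_le] with x hpos hlt
    have ht : 0 < (ρ.rnDeriv σ x).toReal := ENNReal.toReal_pos hpos.ne' hlt.ne
    rw [hu]
    rw [ENNReal.ofReal_inv_of_pos ht, ENNReal.ofReal_toReal hlt.ne]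
  have hlint : ∫⁻ x, ENNReal.ofReal (u x) ∂ρ ≤ 1 := by
    rw [lintegral_congr_ae h_ofReal]
    simpa using lintegral_inv_rnDeriv_le hac
  have hu_int : Integrable u ρ :=
    ⟨hu_meas.aestronglyMeasurable,
      (hasFiniteIntegral_iff_ofReal hu_nonneg).mpr (lt_of_le_of_lt hlint ENNReal.one_lt_top)⟩
  have h_int_u : ∫ x, u x ∂ρ ≤ 1 := by
    rw [integral_eq_lintegral_of_nonneg_ae hu_nonneg hu_meas.aestronglyMeasurable]
    exact ENNReal.toReal_le_of_le_ofReal zero_le_one (by simpa using hlint)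
  have key : ∀ᵐ x ∂ρ, - llr ρ σ x ≤ u x - 1 := by
    filter_upwards [Measure.rnDeriv_pos hac,
      (Measure.rnDeriv_lt_top ρ σ).filter_mono hac.ae_le] with x hpos hlt
    have ht : 0 < (ρ.rnDeriv σ x).toReal := ENNReal.toReal_pos hpos.ne' hlt.ne
    have := Real.log_le_sub_one_of_pos (inv_pos.mpr ht)
    rw [Real.log_inv] at this
    simpa [llr, hu] using this
  have hmono := integral_mono_ae hint.neg (hu_int.sub (integrable_const 1)) key
  simp only [Pi.neg_apply, Pi.sub_apply] at hmono
  rw [integral_neg, integral_sub hu_int (integrable_const 1)] at hmono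
  simp only [integral_const, measure_univ, probReal_univ, ENNReal.toReal_one, smul_eq_mul, one_mul] at hmono
  linarith

lemma llr_chain {η : Measure α} [SigmaFinite ρ] [SigmaFinite η] [SigmaFinite σ]
    (h1 : ρ ≪ η) (h2 : ρ ≪ σ) :
    ∀ᵐ x ∂ρ, llr ρ σ x = llr ρ η x + llr η σ x := by
  have hmul : ρ.rnDeriv η * η.rnDeriv σ =ᵐ[σ] ρ.rnDeriv σ := Measure.rnDeriv_mul_rnDeriv h1
  filter_upwards [hmul.filter_mono h2.ae_le, Measure.rnDeriv_pos h1,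
    (Measure.rnDeriv_lt_top ρ η).filter_mono h1.ae_le, Measure.rnDeriv_pos h2,
    (Measure.rnDeriv_lt_top ρ σ).filter_mono h2.ae_le] with x heq hpos1 hlt1 hpos2 hlt2
  have hb0 : η.rnDeriv σ x ≠ 0 := by
    intro h
    rw [Pi.mul_apply, h, mul_zero] at heq
    exact hpos2.ne' heq.symm
  have hbt : η.rnDeriv σ x ≠ ⊤ := by
    intro h
    rw [Pi.mul_apply, h, ENNReal.mul_top hpos1.ne'] at heq
    exact hlt2.ne heq.symm
  have ha : (ρ.rnDeriv η x).toReal ≠ 0 := (ENNReal.toReal_pos hpos1.ne' hlt1.ne).ne'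
  have hb : (η.rnDeriv σ x).toReal ≠ 0 := (ENNReal.toReal_pos hb0 hbt).ne'
  rw [Pi.mul_apply] at heq
  simp only [llr]
  rw [← heq, ENNReal.toReal_mul, Real.log_mul ha hb]

lemma measurable_map_family {Ω M N : Type*} [MeasurableSpace Ω] [MeasurableSpace M]
    [MeasurableSpace N] {f : Ω → M → N} (hf : Measurable (Function.uncurry f))
    (ν : Measure M) [SFinite ν] :
    Measurable fun ω => ν.map (f ω) := by
  refine Measure.measurable_of_measurable_coe _ fun s hs => ?_
  have heq : ∀ ω, ν.map (f ω) s = ∫⁻ x, s.indicator (fun _ => 1) (f ω x) ∂ν := by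
    intro ω
    rw [Measure.map_apply hf.of_uncurry_left hs]
    rw [← lintegral_indicator_one (hf.of_uncurry_left hs)]
    refine lintegral_congr fun x => ?_
    by_cases hx : f ω x ∈ s <;> simp [Set.indicator_apply, Set.mem_preimage, hx]
  simp_rw [heq]
  exact Measurable.lintegral_prod_right' ((measurable_one.indicator hs).comp hf)

end Aux

/-- Among all probability measures `ν'` on `N`, the mean relative entropy
`Φ_μ(ν | ν')` is minimized by the mean push-forward `ν' = μ ∗ ν`. -/
theorem stmt2 {Ω M N : Type*} [MeasurableSpace Ω] [MeasurableSpace M] [MeasurableSpace N]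
    (μ : Measure Ω) [IsProbabilityMeasure μ]
    (f : Ω → M → N) (hf : Measurable (Function.uncurry f))
    (ν : Measure M) [IsProbabilityMeasure ν]
    (ν' : Measure N) [IsProbabilityMeasure ν'] :
    RMP.meanRelEnt μ f ν (RMP.mpush μ f ν) ≤ RMP.meanRelEnt μ f ν ν' := by
  classical
  have hfω : ∀ ω : Ω, Measurable (f ω) := fun ω => hf.of_uncurry_left
  have hρ_meas : Measurable fun ω => ν.map (f ω) := measurable_map_family hf ν
  have hρ_prob : ∀ ω : Ω, IsProbabilityMeasure (ν.map (f ω)) :=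
    fun ω => Measure.isProbabilityMeasure_map (hfω ω).aemeasurable
  show (∫⁻ ω, RMP.klDiv (ν.map (f ω)) (RMP.mpush μ f ν) ∂μ) ≤
    ∫⁻ ω, RMP.klDiv (ν.map (f ω)) ν' ∂μ
  set η : Measure N := RMP.mpush μ f ν with hη_def
  have hη_apply : ∀ s : Set N, MeasurableSet s → η s = ∫⁻ ω, ν.map (f ω) s ∂μ :=
    fun s hs => Measure.bind_apply hs hρ_meas.aemeasurable
  haveI hη_prob : IsProbabilityMeasure η := by
    constructor
    rw [hη_apply _ MeasurableSet.univ, lintegral_congr fun ω => (hρ_prob ω).measure_univ]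
    simp
  by_cases hfin : ∫⁻ ω, RMP.klDiv (ν.map (f ω)) ν' ∂μ = ⊤
  · rw [hfin]; exact le_top
  -- η ≪ ν'
  have hην' : η ≪ ν' := by
    refine Measure.AbsolutelyContinuous.mk fun s hs hνs => ?_
    have hcoe : Measurable fun ω => ν.map (f ω) s := (Measure.measurable_coe hs).comp hρ_meas
    have hW : ∀ᵐ ω ∂μ, ν.map (f ω) s = 0 := by
      by_contra h
      rw [ae_iff] at h
      have hWm : MeasurableSet {ω | ¬ ν.map (f ω) s = 0} :=
        (hcoe (measurableSet_singleton 0)).compl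
      refine hfin (eq_top_iff.mpr ?_)
      calc (⊤ : ℝ≥0∞) = ⊤ * μ {ω | ¬ ν.map (f ω) s = 0} := by rw [ENNReal.top_mul h]
        _ = ∫⁻ _ in {ω | ¬ ν.map (f ω) s = 0}, ⊤ ∂μ := (setLIntegral_const _ _).symm
        _ ≤ ∫⁻ ω in {ω | ¬ ν.map (f ω) s = 0}, RMP.klDiv (ν.map (f ω)) ν' ∂μ := by
            refine setLIntegral_mono' hWm fun ω hω => ?_
            simp only [RMP.klDiv]
            rw [if_neg (fun hcond => hω (hcond.1 hνs))]
        _ ≤ ∫⁻ ω, RMP.klDiv (ν.map (f ω)) ν' ∂μ := setLIntegral_le_lintegral _ _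
    have h0 : (fun ω => ν.map (f ω) s) =ᵐ[μ] (fun _ => (0:ℝ≥0∞)) := hW
    rw [hη_apply s hs, lintegral_congr_ae h0, lintegral_const, zero_mul]
  have hL_meas : Measurable (llr η ν') := measurable_llr η ν'
  have hLp_meas : Measurable fun x => ENNReal.ofReal (max (llr η ν' x) 0) :=
    (hL_meas.max measurable_const).ennreal_ofReal
  have hLm_meas : Measurable fun x => ENNReal.ofReal (max (-llr η ν' x) 0) :=
    (hL_meas.neg.max measurable_const).ennreal_ofReal
  have hKp_meas : Measurable fun ω =>
      ∫⁻ x, ENNReal.ofReal (max (llr η ν' x) 0) ∂(ν.map (f ω)) :=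
    (Measure.measurable_lintegral hLp_meas).comp hρ_meas
  have hKm_meas : Measurable fun ω =>
      ∫⁻ x, ENNReal.ofReal (max (-llr η ν' x) 0) ∂(ν.map (f ω)) :=
    (Measure.measurable_lintegral hLm_meas).comp hρ_meas
  have hKp_bind : ∫⁻ ω, ∫⁻ x, ENNReal.ofReal (max (llr η ν' x) 0) ∂(ν.map (f ω)) ∂μ
      = ∫⁻ x, ENNReal.ofReal (max (llr η ν' x) 0) ∂η :=
    (Measure.lintegral_bind hρ_meas.aemeasurable hLp_meas.aemeasurable).symm
  have hKm_bind : ∫⁻ ω, ∫⁻ x, ENNReal.ofReal (max (-llr η ν' x) 0) ∂(ν.map (f ω)) ∂μ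
      = ∫⁻ x, ENNReal.ofReal (max (-llr η ν' x) 0) ∂η :=
    (Measure.lintegral_bind hρ_meas.aemeasurable hLm_meas.aemeasurable).symm
  have hLm_η : ∫⁻ x, ENNReal.ofReal (max (-llr η ν' x) 0) ∂η ≤ 1 := by
    have := lintegral_ofReal_neg_llr_le hην'
    rwa [measure_univ] at this
  have hKm_int : ∫⁻ ω, ∫⁻ x, ENNReal.ofReal (max (-llr η ν' x) 0) ∂(ν.map (f ω)) ∂μ ≤ 1 := by
    rw [hKm_bind]; exact hLm_η
  have hKm_ae : ∀ᵐ ω ∂μ,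
      (∫⁻ x, ENNReal.ofReal (max (-llr η ν' x) 0) ∂(ν.map (f ω))) ≠ ⊤ := by
    filter_upwards [ae_lt_top hKm_meas (lt_of_le_of_lt hKm_int ENNReal.one_lt_top).ne]
      with ω h using h.ne
  -- the zero set of the density
  have hSm : MeasurableSet {x | η.rnDeriv ν' x = 0} :=
    Measure.measurable_rnDeriv η ν' (measurableSet_singleton 0)
  have hηS : η {x | η.rnDeriv ν' x = 0} = 0 := by
    have hwd := Measure.withDensity_rnDeriv_eq η ν' hην'
    calc η {x | η.rnDeriv ν' x = 0}
        = (ν'.withDensity (η.rnDeriv ν')) {x | η.rnDeriv ν' x = 0} := by rw [hwd]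
      _ = ∫⁻ x in {x | η.rnDeriv ν' x = 0}, η.rnDeriv ν' x ∂ν' := withDensity_apply _ hSm
      _ = ∫⁻ _ in {x | η.rnDeriv ν' x = 0}, 0 ∂ν' :=
          setLIntegral_congr_fun hSm (fun x hx => hx)
      _ = 0 := by simp
  have hS_ae : ∀ᵐ ω ∂μ, ν.map (f ω) {x | η.rnDeriv ν' x = 0} = 0 := by
    rw [hη_apply _ hSm] at hηS
    have := (lintegral_eq_zero_iff ((Measure.measurable_coe hSm).comp hρ_meas)).mp hηS
    filter_upwards [this] with ω hω using hω
  -- upgrade absolute continuity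
  have hac_η : ∀ ω : Ω, ν.map (f ω) ≪ ν' → ν.map (f ω) {x | η.rnDeriv ν' x = 0} = 0 →
      ν.map (f ω) ≪ η := by
    intro ω h1 h2
    refine Measure.AbsolutelyContinuous.mk fun B hB hηB => ?_
    have hzero : ∫⁻ x in B, η.rnDeriv ν' x ∂ν' = 0 := by
      rw [← withDensity_apply _ hB, Measure.withDensity_rnDeriv_eq η ν' hην']
      exact hηB
    have hg0 : ∀ᵐ x ∂ν', x ∈ B → η.rnDeriv ν' x = 0 :=
      (ae_restrict_iff' hB).mp
        ((lintegral_eq_zero_iff (Measure.measurable_rnDeriv η ν')).mp hzero)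
    have hBS : ν' (B \ {x | η.rnDeriv ν' x = 0}) = 0 := by
      refine measure_mono_null ?_ (ae_iff.mp hg0)
      intro x hx
      simp only [Set.mem_diff, Set.mem_setOf_eq] at hx ⊢
      exact fun hcon => hx.2 (hcon hx.1)
    refine le_antisymm ?_ zero_le
    calc ν.map (f ω) B
        ≤ ν.map (f ω) ((B \ {x | η.rnDeriv ν' x = 0}) ∪ {x | η.rnDeriv ν' x = 0}) :=
          measure_mono (fun x hx => by
            by_cases hxS : x ∈ {x | η.rnDeriv ν' x = 0}
            · exact Set.mem_union_right _ hxS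
            · exact Set.mem_union_left _ ⟨hx, hxS⟩)
      _ ≤ ν.map (f ω) (B \ {x | η.rnDeriv ν' x = 0}) + ν.map (f ω) {x | η.rnDeriv ν' x = 0} :=
          measure_union_le _ _
      _ = 0 := by rw [h1 hBS, h2, add_zero]
  -- main pointwise inequality
  have hmain : ∀ᵐ ω ∂μ,
      (RMP.klDiv (ν.map (f ω)) η
          + ∫⁻ x, ENNReal.ofReal (max (llr η ν' x) 0) ∂(ν.map (f ω))
        ≤ RMP.klDiv (ν.map (f ω)) ν'
          + ∫⁻ x, ENNReal.ofReal (max (-llr η ν' x) 0) ∂(ν.map (f ω))) ∧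
      (∫⁻ x, ENNReal.ofReal (max (llr η ν' x) 0) ∂(ν.map (f ω))
        ≤ RMP.klDiv (ν.map (f ω)) ν'
          + ∫⁻ x, ENNReal.ofReal (max (-llr η ν' x) 0) ∂(ν.map (f ω))) := by
    filter_upwards [hS_ae, hKm_ae] with ω hS0 hKmω
    by_cases hcond : ν.map (f ω) ≪ ν' ∧
        Integrable (fun x => Real.log ((ν.map (f ω)).rnDeriv ν' x).toReal) (ν.map (f ω))
    · obtain ⟨h1, h2'⟩ := hcond
      have h2 : Integrable (llr (ν.map (f ω)) ν') (ν.map (f ω)) := h2'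
      haveI : IsProbabilityMeasure (ν.map (f ω)) := hρ_prob ω
      have hρη : ν.map (f ω) ≪ η := hac_η ω h1 hS0
      have hLm_int : Integrable (fun x => max (-llr η ν' x) 0) (ν.map (f ω)) :=
        ⟨(hL_meas.neg.max measurable_const).aestronglyMeasurable,
          (hasFiniteIntegral_iff_ofReal (ae_of_all _ fun x => le_max_right _ _)).mpr
            hKmω.lt_top⟩
      have hN_int : Integrable (fun x => max (-llr (ν.map (f ω)) η x) 0) (ν.map (f ω)) := by
        refine ⟨((measurable_llr _ η).neg.max measurable_const).aestronglyMeasurable,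
          (hasFiniteIntegral_iff_ofReal (ae_of_all _ fun x => le_max_right _ _)).mpr ?_⟩
        have hb := lintegral_ofReal_neg_llr_le hρη
        rw [measure_univ] at hb
        exact lt_of_le_of_lt hb ENNReal.one_lt_top
      have hch : ∀ᵐ x ∂(ν.map (f ω)),
          llr (ν.map (f ω)) ν' x = llr (ν.map (f ω)) η x + llr η ν' x := llr_chain hρη h1
      have hP_int : Integrable (fun x => max (llr (ν.map (f ω)) η x) 0) (ν.map (f ω)) := by
        refine Integrable.mono' (h2.abs.add hLm_int)
          (((measurable_llr _ η).max measurable_const).aestronglyMeasurable) ?_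
        filter_upwards [hch] with x hx
        rw [Real.norm_eq_abs, abs_of_nonneg (le_max_right _ _)]
        have h1x : llr (ν.map (f ω)) η x ≤ |llr (ν.map (f ω)) ν' x| + max (-llr η ν' x) 0 := by
          have h2x : llr (ν.map (f ω)) ν' x ≤ |llr (ν.map (f ω)) ν' x| := le_abs_self _
          have h3x : -llr η ν' x ≤ max (-llr η ν' x) 0 := le_max_left _ _
          linarith
        exact max_le h1x (add_nonneg (abs_nonneg _) (le_max_right _ _))
      have hllrη_int : Integrable (llr (ν.map (f ω)) η) (ν.map (f ω)) := by
        have hsplit : llr (ν.map (f ω)) η = fun x =>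
            max (llr (ν.map (f ω)) η x) 0 - max (-llr (ν.map (f ω)) η x) 0 :=
          funext fun x => (max_zero_sub_max_neg_zero_eq_self _).symm
        rw [hsplit]; exact hP_int.sub hN_int
      have hL_int : Integrable (llr η ν') (ν.map (f ω)) := by
        have heq : (fun x => llr (ν.map (f ω)) ν' x - llr (ν.map (f ω)) η x)
            =ᵐ[ν.map (f ω)] llr η ν' := hch.mono fun x hx => by
          show llr (ν.map (f ω)) ν' x - llr (ν.map (f ω)) η x = llr η ν' x
          rw [hx]; ring
        exact (h2.sub hllrη_int).congr heq
      have hBAC : ∫ x, llr (ν.map (f ω)) ν' x ∂(ν.map (f ω))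
          = ∫ x, llr (ν.map (f ω)) η x ∂(ν.map (f ω)) + ∫ x, llr η ν' x ∂(ν.map (f ω)) := by
        rw [← integral_add hllrη_int hL_int]
        exact integral_congr_ae (hch.mono fun x hx => hx)
      have hA0 : 0 ≤ ∫ x, llr (ν.map (f ω)) η x ∂(ν.map (f ω)) :=
        integral_llr_nonneg' hρη hllrη_int
      have hB0 : 0 ≤ ∫ x, llr (ν.map (f ω)) ν' x ∂(ν.map (f ω)) :=
        integral_llr_nonneg' h1 h2
      have hLp_int : Integrable (fun x => max (llr η ν' x) 0) (ν.map (f ω)) := hL_int.pos_part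
      have hKp_eq : ∫⁻ x, ENNReal.ofReal (max (llr η ν' x) 0) ∂(ν.map (f ω))
          = ENNReal.ofReal (∫ x, max (llr η ν' x) 0 ∂(ν.map (f ω))) :=
        (MeasureTheory.ofReal_integral_eq_lintegral_ofReal hLp_int
          (ae_of_all _ fun x => le_max_right _ _)).symm
      have hKm_eq : ∫⁻ x, ENNReal.ofReal (max (-llr η ν' x) 0) ∂(ν.map (f ω))
          = ENNReal.ofReal (∫ x, max (-llr η ν' x) 0 ∂(ν.map (f ω))) :=
        (MeasureTheory.ofReal_integral_eq_lintegral_ofReal hLm_int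
          (ae_of_all _ fun x => le_max_right _ _)).symm
      have hCsplit : ∫ x, llr η ν' x ∂(ν.map (f ω))
          = ∫ x, max (llr η ν' x) 0 ∂(ν.map (f ω))
            - ∫ x, max (-llr η ν' x) 0 ∂(ν.map (f ω)) := by
        rw [← integral_sub hLp_int hLm_int]
        exact integral_congr_ae (ae_of_all _ fun x =>
          (max_zero_sub_max_neg_zero_eq_self _).symm)
      have hklν' : RMP.klDiv (ν.map (f ω)) ν'
          = ENNReal.ofReal (∫ x, llr (ν.map (f ω)) ν' x ∂(ν.map (f ω))) := by
        simp only [RMP.klDiv]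
        rw [if_pos ⟨h1, h2'⟩]
        rfl
      have hklη : RMP.klDiv (ν.map (f ω)) η
          = ENNReal.ofReal (∫ x, llr (ν.map (f ω)) η x ∂(ν.map (f ω))) := by
        simp only [RMP.klDiv]
        rw [if_pos ⟨hρη, hllrη_int⟩]
        rfl
      have hCp0 : 0 ≤ ∫ x, max (llr η ν' x) 0 ∂(ν.map (f ω)) :=
        integral_nonneg fun x => le_max_right _ _
      have hCm0 : 0 ≤ ∫ x, max (-llr η ν' x) 0 ∂(ν.map (f ω)) :=
        integral_nonneg fun x => le_max_right _ _
      constructor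
      · rw [hklν', hklη, hKp_eq, hKm_eq, ← ENNReal.ofReal_add hA0 hCp0,
          ← ENNReal.ofReal_add hB0 hCm0]
        exact ENNReal.ofReal_le_ofReal (by linarith)
      · rw [hklν', hKp_eq, hKm_eq, ← ENNReal.ofReal_add hB0 hCm0]
        exact ENNReal.ofReal_le_ofReal (by linarith)
    · have htop : RMP.klDiv (ν.map (f ω)) ν' = ⊤ := by
        simp only [RMP.klDiv]
        rw [if_neg hcond]
      rw [htop]
      exact ⟨le_trans le_top le_self_add, le_trans le_top le_self_add⟩
  -- integrate the pointwise inequality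
  have hsum : ∫⁻ ω, RMP.klDiv (ν.map (f ω)) η ∂μ
        + ∫⁻ ω, ∫⁻ x, ENNReal.ofReal (max (llr η ν' x) 0) ∂(ν.map (f ω)) ∂μ
      ≤ ∫⁻ ω, RMP.klDiv (ν.map (f ω)) ν' ∂μ
        + ∫⁻ ω, ∫⁻ x, ENNReal.ofReal (max (-llr η ν' x) 0) ∂(ν.map (f ω)) ∂μ := by
    rw [← lintegral_add_right _ hKp_meas, ← lintegral_add_right _ hKm_meas]
    exact lintegral_mono_ae (hmain.mono fun ω h => h.1)
  have hKp_fin : ∫⁻ ω, ∫⁻ x, ENNReal.ofReal (max (llr η ν' x) 0) ∂(ν.map (f ω)) ∂μ ≠ ⊤ := by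
    have h1 : ∫⁻ ω, ∫⁻ x, ENNReal.ofReal (max (llr η ν' x) 0) ∂(ν.map (f ω)) ∂μ
        ≤ ∫⁻ ω, RMP.klDiv (ν.map (f ω)) ν' ∂μ
          + ∫⁻ ω, ∫⁻ x, ENNReal.ofReal (max (-llr η ν' x) 0) ∂(ν.map (f ω)) ∂μ := by
      rw [← lintegral_add_right _ hKm_meas]
      exact lintegral_mono_ae (hmain.mono fun ω h => h.2)
    exact (lt_of_le_of_lt h1 (ENNReal.add_lt_top.mpr
      ⟨lt_top_iff_ne_top.mpr hfin, lt_of_le_of_lt hKm_int ENNReal.one_lt_top⟩)).ne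
  have hKmKp : ∫⁻ ω, ∫⁻ x, ENNReal.ofReal (max (-llr η ν' x) 0) ∂(ν.map (f ω)) ∂μ
      ≤ ∫⁻ ω, ∫⁻ x, ENNReal.ofReal (max (llr η ν' x) 0) ∂(ν.map (f ω)) ∂μ := by
    rw [hKp_bind, hKm_bind]
    have hLp_fin : ∫⁻ x, ENNReal.ofReal (max (llr η ν' x) 0) ∂η ≠ ⊤ := by
      rw [← hKp_bind]; exact hKp_fin
    have hLp_int : Integrable (fun x => max (llr η ν' x) 0) η :=
      ⟨(hL_meas.max measurable_const).aestronglyMeasurable,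
        (hasFiniteIntegral_iff_ofReal (ae_of_all _ fun x => le_max_right _ _)).mpr
          (lt_top_iff_ne_top.mpr hLp_fin)⟩
    have hLm_int : Integrable (fun x => max (-llr η ν' x) 0) η :=
      ⟨(hL_meas.neg.max measurable_const).aestronglyMeasurable,
        (hasFiniteIntegral_iff_ofReal (ae_of_all _ fun x => le_max_right _ _)).mpr
          (lt_of_le_of_lt hLm_η ENNReal.one_lt_top)⟩
    have hL_intη : Integrable (llr η ν') η := by
      have hsplit : llr η ν' = fun x => max (llr η ν' x) 0 - max (-llr η ν' x) 0 :=
        funext fun x => (max_zero_sub_max_neg_zero_eq_self _).symm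
      rw [hsplit]; exact hLp_int.sub hLm_int
    have hGibbs : 0 ≤ ∫ x, llr η ν' x ∂η := integral_llr_nonneg' hην' hL_intη
    have hLp_eq : ∫⁻ x, ENNReal.ofReal (max (llr η ν' x) 0) ∂η
        = ENNReal.ofReal (∫ x, max (llr η ν' x) 0 ∂η) :=
      (MeasureTheory.ofReal_integral_eq_lintegral_ofReal hLp_int
        (ae_of_all _ fun x => le_max_right _ _)).symm
    have hLm_eq : ∫⁻ x, ENNReal.ofReal (max (-llr η ν' x) 0) ∂η
        = ENNReal.ofReal (∫ x, max (-llr η ν' x) 0 ∂η) :=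
      (MeasureTheory.ofReal_integral_eq_lintegral_ofReal hLm_int
        (ae_of_all _ fun x => le_max_right _ _)).symm
    rw [hLp_eq, hLm_eq]
    refine ENNReal.ofReal_le_ofReal ?_
    have hsplit2 : ∫ x, llr η ν' x ∂η
        = ∫ x, max (llr η ν' x) 0 ∂η - ∫ x, max (-llr η ν' x) 0 ∂η := by
      rw [← integral_sub hLp_int hLm_int]
      exact integral_congr_ae (ae_of_all _ fun x =>
        (max_zero_sub_max_neg_zero_eq_self _).symm)
    linarith
  have hfinal : ∫⁻ ω, RMP.klDiv (ν.map (f ω)) η ∂μ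
        + ∫⁻ ω, ∫⁻ x, ENNReal.ofReal (max (llr η ν' x) 0) ∂(ν.map (f ω)) ∂μ
      ≤ ∫⁻ ω, RMP.klDiv (ν.map (f ω)) ν' ∂μ
        + ∫⁻ ω, ∫⁻ x, ENNReal.ofReal (max (llr η ν' x) 0) ∂(ν.map (f ω)) ∂μ :=
    le_trans hsum (add_le_add_right hKmKp _)
  exact (ENNReal.add_le_add_iff_right hKp_fin).mp hfinal
end

section
/- Let (Ω, ℙ) be a probability space, M > 0, and let X : Ω → ℝ be a random variable satisfying 0 ≤ X ≤ M almost surely and E[X] = 1. Then E[X log X] ≥ Var(X)/(2M), where Var(X) = E[(X − 1)²] and x log x is interpreted as 0 at x = 0. -/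
open MeasureTheory

section aux
open Real

lemma stmt5_aux1 {x : ℝ} (hx0 : 0 ≤ x) (hx1 : x ≤ 1) :
    (x - 1) + (x - 1)^2 / 2 ≤ x * Real.log x := by
  set F : ℝ → ℝ := fun y => y * Real.log y - (y - 1) - (y - 1)^2 / 2 with hF
  have hant : AntitoneOn F (Set.Icc 0 1) := by
    apply antitoneOn_of_deriv_nonpos (convex_Icc 0 1)
    · exact (Real.continuous_mul_log.sub (by continuity)).continuousOn.sub
        ((continuous_id.sub continuous_const).pow 2 |>.div_const 2).continuousOn
    · intro y hy
      rw [interior_Icc] at hy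
      exact ((((Real.hasDerivAt_mul_log (ne_of_gt hy.1)).sub
        ((hasDerivAt_id y).sub_const 1)).sub
        ((((hasDerivAt_id y).sub_const 1).pow 2).div_const 2)).differentiableAt).differentiableWithinAt
    · intro y hy
      rw [interior_Icc] at hy
      have hd : HasDerivAt F ((Real.log y + 1) - 1 - (2 * (y - 1) ^ 1 * 1) / 2) y :=
        ((Real.hasDerivAt_mul_log (ne_of_gt hy.1)).sub
          ((hasDerivAt_id y).sub_const 1)).sub
          ((((hasDerivAt_id y).sub_const 1).pow 2).div_const 2)
      rw [hd.deriv]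
      have := Real.log_le_sub_one_of_pos hy.1
      nlinarith [hy.2.le]
  have h := hant (Set.mem_Icc.2 ⟨hx0, hx1⟩) (Set.mem_Icc.2 ⟨zero_le_one, le_refl 1⟩) hx1
  simp [hF] at h
  nlinarith [h]

lemma stmt5_aux2 {x : ℝ} (hx1 : 1 ≤ x) :
    (x - 1) + (x - 1)^2 / (2 * x) ≤ x * Real.log x := by
  set G : ℝ → ℝ := fun y => y * Real.log y - (3/2) * y + 2 - 1 / (2 * y) with hG
  have hder : ∀ y : ℝ, 0 < y → HasDerivAt G (Real.log y - 1/2 + 1/(2*y^2)) y := by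
    intro y hy0
    have h2y : HasDerivAt (fun z : ℝ => 2 * z) 2 y := by
      simpa using (hasDerivAt_id y).const_mul (2:ℝ)
    have h1 : HasDerivAt (fun z : ℝ => 1 / (2 * z)) ((0 * (2*y) - 1 * 2) / (2*y)^2) y :=
      (hasDerivAt_const y (1:ℝ)).div h2y (by positivity)
    have h2 := (((Real.hasDerivAt_mul_log (ne_of_gt hy0)).sub
      ((hasDerivAt_id y).const_mul (3/2 : ℝ))).add_const 2).sub h1
    refine h2.congr_deriv ?_
    field_simp
    ring
  have hmono : MonotoneOn G (Set.Ici 1) := by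
    apply monotoneOn_of_deriv_nonneg (convex_Ici 1)
    · apply ContinuousOn.sub
      · exact ((Real.continuous_mul_log.sub (by continuity)).add continuous_const).continuousOn
      · apply ContinuousOn.div continuousOn_const (continuous_const.mul continuous_id).continuousOn
        intro y hy; simp at hy; show (2:ℝ) * y ≠ 0; positivity
    · intro y hy
      rw [interior_Ici] at hy
      exact (hder y (lt_trans one_pos hy)).differentiableAt.differentiableWithinAt
    · intro y hy
      rw [interior_Ici] at hy
      have hy0 : (0:ℝ) < y := lt_trans one_pos hy
      rw [(hder y hy0).deriv]
      have hlog := Real.one_sub_inv_le_log_of_pos hy0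
      have h3 : (0:ℝ) < y^2 := by positivity
      have expand : Real.log y - 1/2 + 1/(2*y^2)
          = (Real.log y - (1 - y⁻¹)) + (y-1)^2/(2*y^2) := by
        field_simp
        ring
      rw [expand]
      have : 0 ≤ (y-1)^2/(2*y^2) := by positivity
      linarith
  have h := hmono (Set.mem_Ici.2 (le_refl 1)) (Set.mem_Ici.2 hx1) hx1
  have hx0 : (0:ℝ) < x := lt_of_lt_of_le one_pos hx1
  simp only [hG] at h
  rw [Real.log_one] at h
  norm_num at h
  have key : (x - 1) + (x - 1)^2 / (2 * x) = (3/2)*x - 2 + 1/(2*x) := by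
    field_simp
    ring
  rw [key, show (1:ℝ)/(2*x) = x⁻¹*(1/2) by ring]
  linarith

end aux

/-- If `0 ≤ X ≤ M` almost surely and `E[X] = 1`, then
`E[X log X] ≥ Var(X) / (2M)`, where `Var(X) = E[(X − 1)²]`. -/
theorem stmt5 {Ω : Type*} [MeasurableSpace Ω] (Pr : Measure Ω) [IsProbabilityMeasure Pr]
    (M : ℝ) (hM : 0 < M) (X : Ω → ℝ) (hX : Measurable X)
    (hbd : ∀ᵐ ω ∂Pr, 0 ≤ X ω ∧ X ω ≤ M)
    (hmean : ∫ ω, X ω ∂Pr = 1) :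
    (∫ ω, (X ω - 1) ^ 2 ∂Pr) / (2 * M) ≤ ∫ ω, X ω * Real.log (X ω) ∂Pr := by
  have hintX : Integrable X Pr := by
    apply Integrable.mono' (integrable_const M) hX.aestronglyMeasurable
    filter_upwards [hbd] with ω hω
    rw [Real.norm_eq_abs, abs_of_nonneg hω.1]; exact hω.2
  have hM1 : (1:ℝ) ≤ M := by
    have h := integral_mono_ae hintX (integrable_const M) (hbd.mono fun ω h => h.2)
    simpa [hmean] using h
  have hintsq : Integrable (fun ω => (X ω - 1)^2) Pr := by
    apply Integrable.mono' (integrable_const ((M+1)^2))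
      ((hX.sub measurable_const).pow_const 2).aestronglyMeasurable
    filter_upwards [hbd] with ω hω
    rw [Real.norm_eq_abs, abs_of_nonneg (sq_nonneg _)]
    show (X ω - 1) ^ 2 ≤ (M + 1) ^ 2
    nlinarith [hω.1, hω.2]
  have hlogM : (0:ℝ) ≤ Real.log M := Real.log_nonneg hM1
  have hintlog : Integrable (fun ω => X ω * Real.log (X ω)) Pr := by
    apply Integrable.mono' (integrable_const (1 + M * Real.log M))
      (hX.mul (Real.measurable_log.comp hX)).aestronglyMeasurable
    filter_upwards [hbd] with ω hω
    rw [Real.norm_eq_abs, abs_le]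
    simp only [Pi.mul_apply, Function.comp_apply]
    constructor
    · -- x log x ≥ x - 1 ≥ -1
      have h1 : X ω - 1 ≤ X ω * Real.log (X ω) := by
        rcases eq_or_lt_of_le hω.1 with h0 | h0
        · simp [← h0]
        · have := Real.one_sub_inv_le_log_of_pos h0
          have h2 : X ω * (1 - (X ω)⁻¹) ≤ X ω * Real.log (X ω) :=
            mul_le_mul_of_nonneg_left this hω.1
          have h3 : X ω * (1 - (X ω)⁻¹) = X ω - 1 := by
            field_simp
          linarith
      nlinarith [hω.1, hω.2]
    · rcases le_or_gt (X ω) 1 with h1 | h1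
      · have : X ω * Real.log (X ω) ≤ 0 := by
          rcases eq_or_lt_of_le hω.1 with h0 | h0
          · simp [← h0]
          · exact mul_nonpos_of_nonneg_of_nonpos hω.1 (Real.log_nonpos h0.le h1) |>.trans (le_refl _)
        nlinarith
      · have hl : Real.log (X ω) ≤ Real.log M := Real.log_le_log (lt_trans one_pos h1) hω.2
        have hl0 : 0 ≤ Real.log (X ω) := Real.log_nonneg h1.le
        nlinarith [hω.2, hω.1]
  have hpt : ∀ᵐ ω ∂Pr, (X ω - 1) + (X ω - 1)^2 / (2*M) ≤ X ω * Real.log (X ω) := by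
    filter_upwards [hbd] with ω hω
    rcases le_or_gt (X ω) 1 with h1 | h1
    · have h2 : (X ω - 1)^2 / (2*M) ≤ (X ω - 1)^2 / 2 :=
        div_le_div_of_nonneg_left (sq_nonneg _) two_pos (by linarith)
      have := stmt5_aux1 hω.1 h1
      linarith
    · have h2 : (X ω - 1)^2 / (2*M) ≤ (X ω - 1)^2 / (2 * X ω) :=
        div_le_div_of_nonneg_left (sq_nonneg _) (by positivity) (by linarith [hω.2])
      have := stmt5_aux2 h1.le
      linarith
  have hint1 : Integrable (fun ω => X ω - 1) Pr := hintX.sub (integrable_const 1)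
  have hintL : Integrable (fun ω => (X ω - 1) + (X ω - 1)^2 / (2*M)) Pr :=
    hint1.add (hintsq.div_const (2*M))
  have hineq := integral_mono_ae hintL hintlog hpt
  have hcalc : ∫ ω, ((X ω - 1) + (X ω - 1)^2 / (2*M)) ∂Pr
      = (∫ ω, (X ω - 1)^2 ∂Pr) / (2*M) := by
    rw [integral_add hint1 (hintsq.div_const (2*M)),
      integral_sub hintX (integrable_const 1), integral_div]
    simp [hmean]
  rw [hcalc] at hineq
  exact hineq
end

section
/- Fix d ≥ 1, 1 ≤ k ≤ d, and L > 0. There exist constants C > 0 and ε₀ > 0 such that for every probability measure μ ∈ 𝓜_L on d×d real matrices, every orthonormal family v_1, …, v_k of vectors in ℝ^d, and every 0 < ε < ε₀: |∫ (1/2) log det G_ε(E) dμ(E) − k(d−k−1)ε²/2| ≤ C ε³, where G_ε(E) is the k×k matrix with entries G_ε(E)_{ij} = ⟨(I + εE)v_i, (I + εE)v_j⟩ for 1 ≤ i, j ≤ k. Equivalently, ∫ log ‖(I+εE)(v_1 ∧ ⋯ ∧ v_k)‖ dμ(E) = k(d−k−1)ε²/2 + O(ε³) uniformly over unit-norm rank-one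 elements v_1 ∧ ⋯ ∧ v_k of the k-th exterior power of ℝ^d. -/
open MeasureTheory ProbabilityTheory Filter Matrix

namespace RMP

noncomputable instance {d : ℕ} : MeasureSpace (Matrix (Fin d) (Fin d) ℝ) :=
  inferInstanceAs (MeasureSpace (Fin d → Fin d → ℝ))

/-- The operator norm of a `d × d` real matrix, acting on Euclidean space. -/
noncomputable def opNorm {d : ℕ} (A : Matrix (Fin d) (Fin d) ℝ) : ℝ :=
  ‖LinearMap.toContinuousLinearMap (Matrix.toEuclideanLin A)‖

/-- The list of singular values of `A` (square roots of the eigenvalues of `Aᵀ A`),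
sorted in increasing order. -/
noncomputable def svList {d : ℕ} (A : Matrix (Fin d) (Fin d) ℝ) : List ℝ :=
  (Multiset.map Real.sqrt
    (Multiset.map (show (Aᵀ * A).IsHermitian by
      rw [Matrix.IsHermitian, Matrix.conjTranspose_eq_transpose_of_trivial, Matrix.transpose_mul,
        Matrix.transpose_transpose]).eigenvalues Finset.univ.val)).sort
    (· ≤ ·)

/-- `singVal A k`: the `k`-th largest singular value of `A` (for `1 ≤ k ≤ d`), i.e. the
square root of the `k`-th largest eigenvalue of `Aᵀ A`. -/
noncomputable def singVal {d : ℕ} (A : Matrix (Fin d) (Fin d) ℝ) (k : ℕ) : ℝ :=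
  (svList A).getD (d - k) 0

/-- `revProd M n = M (n-1) * ⋯ * M 1 * M 0`. -/
noncomputable def revProd {d : ℕ} (M : ℕ → Matrix (Fin d) (Fin d) ℝ) (n : ℕ) :
    Matrix (Fin d) (Fin d) ℝ :=
  (List.range n).foldl (fun P i => M i * P) 1

end RMP

namespace RMP

/-- The class `𝓜_L` of probability measures on `d × d` matrices: supported on the operator-norm
ball of radius `L`, with centered entries and identity-covariance structure
`∫ E_{ij} E_{kl} dμ = δ_{ik} δ_{jl}`. -/
def memML (d : ℕ) (L : ℝ) (μ : MeasureTheory.Measure (Matrix (Fin d) (Fin d) ℝ)) : Prop :=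
  MeasureTheory.IsProbabilityMeasure μ ∧
  μ {E | opNorm E ≤ L} = 1 ∧
  (∀ i j : Fin d, ∫ E, E i j ∂μ = 0) ∧
  (∀ i j k l : Fin d, ∫ E, E i j * E k l ∂μ = if i = k ∧ j = l then 1 else 0)

end RMP




lemma log_taylor2 {y : ℝ} (hy : |y| ≤ 1/2) :
    |Real.log (1 + y) - y + y^2/2| ≤ 2 * |y|^3 := by
  have h1 : |(-y)| < 1 := by rw [abs_neg]; linarith
  have h := Real.abs_log_sub_add_sum_range_le h1 2
  simp only [Finset.sum_range_succ, Finset.sum_range_zero] at h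
  have e1 : (1 : ℝ) - -y = 1 + y := by ring
  rw [e1] at h
  have e2 : (0 : ℝ) + (-y)^(0+1)/(0+1) + (-y)^(1+1)/((1:ℕ)+1) = -y + y^2/2 := by
    push_cast; ring
  rw [abs_neg] at h
  have h2 : |(-y + y^2/2) + Real.log (1+y)| ≤ |y|^(2+1) / (1 - |y|) := by
    convert h using 3 <;> push_cast <;> ring
  have h3 : 1 - |y| ≥ 1/2 := by linarith
  have h4 : |y|^3 / (1 - |y|) ≤ 2 * |y|^3 := by
    rw [div_le_iff₀ (by linarith)]
    nlinarith [pow_nonneg (abs_nonneg y) 3]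
  have e3 : Real.log (1+y) - y + y^2/2 = -y + y^2/2 + Real.log (1+y) := by ring
  rw [e3]
  calc |(-y + y^2/2) + Real.log (1+y)| ≤ |y|^3 / (1 - |y|) := by exact_mod_cast h2
      _ ≤ 2*|y|^3 := h4

lemma logdet_taylor {k : ℕ} {H : Matrix (Fin k) (Fin k) ℝ} (hH : H.IsHermitian) {δ : ℝ}
    (hδ0 : 0 ≤ δ) (hδ : δ ≤ 1/2) (htr : (H*H).trace ≤ δ^2) :
    |Real.log ((1 + H).det) - H.trace + (H*H).trace / 2| ≤ 2*k*δ^3 := by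
  set U : Matrix (Fin k) (Fin k) ℝ := (hH.eigenvectorUnitary : Matrix (Fin k) (Fin k) ℝ) with hUdef
  set f : Fin k → ℝ := hH.eigenvalues with hfdef
  have hspec : H = U * diagonal f * star U := by
    have := hH.spectral_theorem
    simpa [RCLike.ofReal_real_eq_id] using this
  have hU1 : U * star U = 1 := (Matrix.mem_unitaryGroup_iff).mp hH.eigenvectorUnitary.2
  have hU2 : star U * U = 1 := (Matrix.mem_unitaryGroup_iff').mp hH.eigenvectorUnitary.2
  -- trace identities
  have htr1 : H.trace = ∑ i, f i := by
    rw [hspec, Matrix.trace_mul_cycle, hU2, Matrix.one_mul, Matrix.trace_diagonal]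
  have hHH : H * H = U * diagonal (fun i => f i * f i) * star U := by
    rw [hspec]
    calc U * diagonal f * star U * (U * diagonal f * star U)
        = U * diagonal f * (star U * U) * diagonal f * star U := by
          simp only [Matrix.mul_assoc]
      _ = U * (diagonal f * diagonal f) * star U := by
          rw [hU2, Matrix.mul_one]; simp only [Matrix.mul_assoc]
      _ = U * diagonal (fun i => f i * f i) * star U := by
          rw [Matrix.diagonal_mul_diagonal]
  have htr2 : (H*H).trace = ∑ i, f i * f i := by
    rw [hHH, Matrix.trace_mul_cycle, hU2, Matrix.one_mul, Matrix.trace_diagonal]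
  have hdet : (1 + H).det = ∏ i, (1 + f i) := by
    have h1 : (1 : Matrix (Fin k) (Fin k) ℝ) + H = U * diagonal (fun i => 1 + f i) * star U := by
      rw [hspec]
      have : (diagonal (fun i : Fin k => 1 + f i)) = 1 + diagonal f := by
        rw [← Matrix.diagonal_one, Matrix.diagonal_add]
      rw [this, Matrix.mul_add, Matrix.add_mul, Matrix.mul_one, hU1]
    rw [h1, Matrix.det_mul, Matrix.det_mul, mul_comm, ← mul_assoc, ← Matrix.det_mul, hU2]
    simp [Matrix.det_diagonal]
  -- eigenvalue bounds
  have hfb : ∀ i, |f i| ≤ δ := by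
    intro i
    have h1 : f i * f i ≤ ∑ j, f j * f j := by
      have := Finset.single_le_sum (f := fun j => f j * f j)
        (fun j _ => mul_self_nonneg (f j)) (Finset.mem_univ i)
      exact this
    have h2 : f i * f i ≤ δ^2 := by
      rw [← htr2] at h1; linarith [htr]
    nlinarith [abs_nonneg (f i), sq_abs (f i), le_abs_self (f i), neg_abs_le (f i)]
  have hpos : ∀ i, (0:ℝ) < 1 + f i := by
    intro i; have := hfb i; have := abs_le.mp this; linarith [this.1]
  have hlog : Real.log ((1+H).det) = ∑ i, Real.log (1 + f i) := by
    rw [hdet, Real.log_prod]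
    intro i _; exact ne_of_gt (hpos i)
  rw [hlog, htr1, htr2]
  have e : (∑ i, Real.log (1 + f i)) - (∑ i, f i) + (∑ i, f i * f i)/2
      = ∑ i, (Real.log (1 + f i) - f i + (f i)^2/2) := by
    rw [Finset.sum_add_distrib, Finset.sum_sub_distrib, ← Finset.sum_div]
    congr 2
    apply Finset.sum_congr rfl; intro i _; ring
  rw [e]
  calc |∑ i, (Real.log (1 + f i) - f i + (f i)^2/2)|
      ≤ ∑ i, |Real.log (1 + f i) - f i + (f i)^2/2| := Finset.abs_sum_le_sum_abs _ _
    _ ≤ ∑ _i : Fin k, 2*δ^3 := by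
        apply Finset.sum_le_sum
        intro i _
        have h1 := log_taylor2 (y := f i) (le_trans (hfb i) hδ)
        have h2 : |f i|^3 ≤ δ^3 := by
          apply pow_le_pow_left₀ (abs_nonneg _) (hfb i)
        linarith
    _ = 2*k*δ^3 := by simp [Finset.sum_const]; ring



namespace RMP

section Bounds

variable {d : ℕ}

/-- dot product as inner product on Euclidean space -/
lemma dot_eq_inner (x y : Fin d → ℝ) :
    x ⬝ᵥ y = (inner ℝ ((WithLp.equiv 2 (Fin d → ℝ)).symm x)
      ((WithLp.equiv 2 (Fin d → ℝ)).symm y) : ℝ) := by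
  rw [PiLp.inner_apply]
  simp [dotProduct, mul_comm]

lemma norm_equiv_symm_one {x : Fin d → ℝ} (hx : x ⬝ᵥ x = 1) :
    ‖(WithLp.equiv 2 (Fin d → ℝ)).symm x‖ = 1 := by
  have h := real_inner_self_eq_norm_mul_norm ((WithLp.equiv 2 (Fin d → ℝ)).symm x)
  rw [← dot_eq_inner, hx] at h
  nlinarith [norm_nonneg ((WithLp.equiv 2 (Fin d → ℝ)).symm x)]

lemma norm_mulVec_le {E : Matrix (Fin d) (Fin d) ℝ} {L : ℝ} (hE : opNorm E ≤ L)
    {x : Fin d → ℝ} (hx : x ⬝ᵥ x = 1) :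
    ‖(WithLp.equiv 2 (Fin d → ℝ)).symm (E *ᵥ x)‖ ≤ L := by
  have h := (LinearMap.toContinuousLinearMap (Matrix.toEuclideanLin E)).le_opNorm
    ((WithLp.equiv 2 (Fin d → ℝ)).symm x)
  rw [norm_equiv_symm_one hx, mul_one] at h
  have e : (LinearMap.toContinuousLinearMap (Matrix.toEuclideanLin E))
      ((WithLp.equiv 2 (Fin d → ℝ)).symm x)
      = (WithLp.equiv 2 (Fin d → ℝ)).symm (E *ᵥ x) := by
    simp [LinearMap.coe_toContinuousLinearMap']
  rw [e] at h
  exact le_trans h hE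

lemma dot_mulVec_bound {E : Matrix (Fin d) (Fin d) ℝ} {L : ℝ} (hE : opNorm E ≤ L)
    {x y : Fin d → ℝ} (hx : x ⬝ᵥ x = 1) (hy : y ⬝ᵥ y = 1) :
    |(E *ᵥ x) ⬝ᵥ y| ≤ L := by
  rw [dot_eq_inner]
  calc |(inner ℝ ((WithLp.equiv 2 (Fin d → ℝ)).symm (E *ᵥ x))
      ((WithLp.equiv 2 (Fin d → ℝ)).symm y) : ℝ)|
      ≤ ‖(WithLp.equiv 2 (Fin d → ℝ)).symm (E *ᵥ x)‖ *
        ‖(WithLp.equiv 2 (Fin d → ℝ)).symm y‖ := abs_real_inner_le_norm _ _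
    _ ≤ L * 1 := by
        have hL0 : 0 ≤ L := le_trans (norm_nonneg _) hE
        apply mul_le_mul (norm_mulVec_le hE hx) (le_of_eq (norm_equiv_symm_one hy))
          (norm_nonneg _) hL0
    _ = L := mul_one L

lemma dot_mulVec_mulVec_bound {E : Matrix (Fin d) (Fin d) ℝ} {L : ℝ} (hE : opNorm E ≤ L)
    (hL : 0 ≤ L) {x y : Fin d → ℝ} (hx : x ⬝ᵥ x = 1) (hy : y ⬝ᵥ y = 1) :
    |(E *ᵥ x) ⬝ᵥ (E *ᵥ y)| ≤ L^2 := by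
  rw [dot_eq_inner]
  calc |(inner ℝ ((WithLp.equiv 2 (Fin d → ℝ)).symm (E *ᵥ x))
      ((WithLp.equiv 2 (Fin d → ℝ)).symm (E *ᵥ y)) : ℝ)|
      ≤ ‖(WithLp.equiv 2 (Fin d → ℝ)).symm (E *ᵥ x)‖ *
        ‖(WithLp.equiv 2 (Fin d → ℝ)).symm (E *ᵥ y)‖ := abs_real_inner_le_norm _ _
    _ ≤ L * L := mul_le_mul (norm_mulVec_le hE hx) (norm_mulVec_le hE hy) (norm_nonneg _) hL
    _ = L^2 := (sq L).symm

end Bounds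
end RMP



namespace RMP

instance {d : ℕ} : BorelSpace (Matrix (Fin d) (Fin d) ℝ) :=
  inferInstanceAs (BorelSpace (Fin d → Fin d → ℝ))

section Meas

variable {d : ℕ}

lemma meas_entry (a b : Fin d) : Measurable fun E : Matrix (Fin d) (Fin d) ℝ => E a b :=
  (measurable_pi_apply b).comp (measurable_pi_apply a)

lemma meas_opNorm : Measurable fun E : Matrix (Fin d) (Fin d) ℝ => opNorm E := by
  have hlin : Continuous fun E : Matrix (Fin d) (Fin d) ℝ =>
      (LinearMap.toContinuousLinearMap (Matrix.toEuclideanLin E)) := by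
    exact LinearMap.continuous_of_finiteDimensional
      ((LinearMap.toContinuousLinearMap : _ ≃ₗ[ℝ] _).toLinearMap.comp
        (Matrix.toEuclideanLin (𝕜 := ℝ) (m := Fin d) (n := Fin d)).toLinearMap)
  exact (continuous_norm.comp hlin).measurable

variable {L : ℝ} {μ : Measure (Matrix (Fin d) (Fin d) ℝ)}

lemma ae_opNorm (hμ : IsProbabilityMeasure μ) (h1 : μ {E | opNorm E ≤ L} = 1) :
    ∀ᵐ E ∂μ, opNorm E ≤ L := by
  have hm : MeasurableSet {E : Matrix (Fin d) (Fin d) ℝ | opNorm E ≤ L} :=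
    measurableSet_le meas_opNorm measurable_const
  rw [ae_iff]
  have : {E : Matrix (Fin d) (Fin d) ℝ | ¬ opNorm E ≤ L} = {E | opNorm E ≤ L}ᶜ := rfl
  rw [this, measure_compl hm (measure_ne_top μ _), h1, measure_univ]
  simp

lemma int_sq (hμ : IsProbabilityMeasure μ)
    (hcov : ∀ i j k l : Fin d, ∫ E, E i j * E k l ∂μ = if i = k ∧ j = l then 1 else 0)
    (a b : Fin d) : Integrable (fun E => E a b * E a b) μ := by
  by_contra h
  have := hcov a b a b
  rw [integral_undef h] at this
  simp at this

lemma int_prod (hμ : IsProbabilityMeasure μ)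
    (hcov : ∀ i j k l : Fin d, ∫ E, E i j * E k l ∂μ = if i = k ∧ j = l then 1 else 0)
    (a b c e : Fin d) : Integrable (fun E => E a b * E c e) μ := by
  apply Integrable.mono' (((int_sq hμ hcov a b).add (int_sq hμ hcov c e)))
  · exact ((meas_entry a b).mul (meas_entry c e)).aestronglyMeasurable
  · apply ae_of_all
    intro E
    simp only [Real.norm_eq_abs, abs_mul, Pi.add_apply]
    nlinarith [abs_nonneg (E a b), abs_nonneg (E c e), sq_abs (E a b), sq_abs (E c e),
      sq_nonneg (|E a b| - |E c e|)]

lemma int_entry (hμ : IsProbabilityMeasure μ)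
    (hcov : ∀ i j k l : Fin d, ∫ E, E i j * E k l ∂μ = if i = k ∧ j = l then 1 else 0)
    (a b : Fin d) : Integrable (fun E => E a b) μ := by
  apply Integrable.mono' ((int_sq hμ hcov a b).add (integrable_const 1))
  · exact (meas_entry a b).aestronglyMeasurable
  · apply ae_of_all
    intro E
    simp only [Real.norm_eq_abs, Pi.add_apply]
    nlinarith [abs_nonneg (E a b), sq_abs (E a b), sq_nonneg (|E a b| - 1)]

end Meas
end RMP



namespace RMP

section Expand

variable {d : ℕ}

lemma AA_eq (x y : Fin d → ℝ) (E : Matrix (Fin d) (Fin d) ℝ) :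
    (E *ᵥ x) ⬝ᵥ y + x ⬝ᵥ (E *ᵥ y) = ∑ a, ∑ b, E a b * (x b * y a + y b * x a) := by
  simp only [dotProduct, mulVec, Finset.sum_mul, Finset.mul_sum, mul_add,
    ← Finset.sum_add_distrib]
  apply Finset.sum_congr rfl; intro a _
  apply Finset.sum_congr rfl; intro b _
  ring

lemma BB_eq (x y : Fin d → ℝ) (E : Matrix (Fin d) (Fin d) ℝ) :
    (E *ᵥ x) ⬝ᵥ (E *ᵥ y) = ∑ a, ∑ b, ∑ c, (E a b * E a c) * (x b * y c) := by
  simp only [dotProduct, mulVec, Finset.sum_mul, Finset.mul_sum]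
  apply Finset.sum_congr rfl; intro a _
  rw [Finset.sum_comm]
  apply Finset.sum_congr rfl; intro b _
  apply Finset.sum_congr rfl; intro c _
  ring

lemma lin_mul_lin (w w' : Fin d → Fin d → ℝ) (E : Matrix (Fin d) (Fin d) ℝ) :
    (∑ a, ∑ b, E a b * w a b) * (∑ a, ∑ b, E a b * w' a b)
    = ∑ a, ∑ b, ∑ c, ∑ e, (E a b * E c e) * (w a b * w' c e) := by
  rw [Finset.sum_mul_sum]
  apply Finset.sum_congr rfl; intro a _
  rw [Finset.sum_comm]
  apply Finset.sum_congr rfl; intro b _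
  rw [Finset.sum_mul_sum]
  apply Finset.sum_congr rfl; intro c _
  apply Finset.sum_congr rfl; intro e _
  ring

lemma collapse (a b : Fin d) (g : Fin d → Fin d → ℝ) :
    (∑ c, ∑ e, (if a = c ∧ b = e then (1:ℝ) else 0) * g c e) = g a b := by
  simp [ite_and, ite_mul, Finset.sum_ite_eq]

lemma sum_w_sq (x y : Fin d → ℝ) :
    (∑ a, ∑ b, (x b * y a + y b * x a) * (x b * y a + y b * x a))
    = 2*(x ⬝ᵥ x)*(y ⬝ᵥ y) + 2*(x ⬝ᵥ y)*(x ⬝ᵥ y) := by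
  have h : ∀ a b : Fin d, (x b * y a + y b * x a) * (x b * y a + y b * x a)
      = (y a * y a) * (x b * x b) + (x a * x a) * (y b * y b)
        + 2 * ((x a * y a) * (x b * y b)) := by intro a b; ring
  simp only [h, Finset.sum_add_distrib, ← Finset.mul_sum, ← Finset.sum_mul]
  simp only [dotProduct]
  ring

end Expand
end RMP

namespace RMP

section Integrals

variable {d : ℕ} {μ : Measure (Matrix (Fin d) (Fin d) ℝ)}
variable (hμ : IsProbabilityMeasure μ)
variable (hcov : ∀ i j k l : Fin d, ∫ E, E i j * E k l ∂μ = if i = k ∧ j = l then 1 else 0)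

include hμ hcov

lemma intg_lin (w : Fin d → Fin d → ℝ) :
    Integrable (fun E : Matrix (Fin d) (Fin d) ℝ => ∑ a, ∑ b, E a b * w a b) μ := by
  apply integrable_finset_sum; intro a _
  apply integrable_finset_sum; intro b _
  exact (int_entry hμ hcov a b).mul_const _

lemma integral_lin (hmean : ∀ i j : Fin d, ∫ E, E i j ∂μ = 0) (w : Fin d → Fin d → ℝ) :
    ∫ E, (∑ a, ∑ b, E a b * w a b) ∂μ = 0 := by
  rw [integral_finset_sum _
    (fun a _ => integrable_finset_sum _ (fun b _ => (int_entry hμ hcov a b).mul_const _))]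
  apply Finset.sum_eq_zero; intro a _
  rw [integral_finset_sum _ (fun b _ => (int_entry hμ hcov a b).mul_const _)]
  apply Finset.sum_eq_zero; intro b _
  rw [integral_mul_const, hmean a b, zero_mul]

lemma intg_quad2 (w w' : Fin d → Fin d → ℝ) :
    Integrable (fun E : Matrix (Fin d) (Fin d) ℝ =>
      ∑ a, ∑ b, ∑ c, ∑ e, (E a b * E c e) * (w a b * w' c e)) μ := by
  apply integrable_finset_sum; intro a _
  apply integrable_finset_sum; intro b _
  apply integrable_finset_sum; intro c _
  apply integrable_finset_sum; intro e _
  exact (int_prod hμ hcov a b c e).mul_const _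

lemma integral_quad2 (w w' : Fin d → Fin d → ℝ) :
    ∫ E, (∑ a, ∑ b, ∑ c, ∑ e, (E a b * E c e) * (w a b * w' c e)) ∂μ
    = ∑ a, ∑ b, w a b * w' a b := by
  rw [integral_finset_sum _ (fun a _ => integrable_finset_sum _ (fun b _ =>
    integrable_finset_sum _ (fun c _ => integrable_finset_sum _ (fun e _ =>
      (int_prod hμ hcov a b c e).mul_const _))))]
  apply Finset.sum_congr rfl; intro a _
  rw [integral_finset_sum _ (fun b _ => integrable_finset_sum _ (fun c _ =>
    integrable_finset_sum _ (fun e _ => (int_prod hμ hcov a b c e).mul_const _)))]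
  apply Finset.sum_congr rfl; intro b _
  have h1 : ∀ c e : Fin d, ∫ E, (E a b * E c e) * (w a b * w' c e) ∂μ
      = (if a = c ∧ b = e then (1:ℝ) else 0) * (w a b * w' c e) := by
    intro c e
    rw [integral_mul_const, hcov a b c e]
  rw [integral_finset_sum _ (fun c _ => integrable_finset_sum _ (fun e _ =>
    (int_prod hμ hcov a b c e).mul_const _))]
  have h2 : ∀ c : Fin d, ∫ E, (∑ e, (E a b * E c e) * (w a b * w' c e)) ∂μ
      = ∑ e, (if a = c ∧ b = e then (1:ℝ) else 0) * (w a b * w' c e) := by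
    intro c
    rw [integral_finset_sum _ (fun e _ => (int_prod hμ hcov a b c e).mul_const _)]
    exact Finset.sum_congr rfl (fun e _ => h1 c e)
  simp only [h2]
  have := collapse a b (fun c e => w a b * w' c e)
  rw [this]

lemma intg_quadB (g : Fin d → Fin d → ℝ) :
    Integrable (fun E : Matrix (Fin d) (Fin d) ℝ =>
      ∑ a, ∑ b, ∑ c, (E a b * E a c) * g b c) μ := by
  apply integrable_finset_sum; intro a _
  apply integrable_finset_sum; intro b _
  apply integrable_finset_sum; intro c _
  exact (int_prod hμ hcov a b a c).mul_const _

lemma integral_quadB (g : Fin d → Fin d → ℝ) :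
    ∫ E, (∑ a, ∑ b, ∑ c, (E a b * E a c) * g b c) ∂μ = ∑ _a : Fin d, ∑ b, g b b := by
  rw [integral_finset_sum _ (fun a _ => integrable_finset_sum _ (fun b _ =>
    integrable_finset_sum _ (fun c _ => (int_prod hμ hcov a b a c).mul_const _)))]
  apply Finset.sum_congr rfl; intro a _
  rw [integral_finset_sum _ (fun b _ => integrable_finset_sum _ (fun c _ =>
    (int_prod hμ hcov a b a c).mul_const _))]
  apply Finset.sum_congr rfl; intro b _
  rw [integral_finset_sum _ (fun c _ => (int_prod hμ hcov a b a c).mul_const _)]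
  have h1 : ∀ c : Fin d, ∫ E, (E a b * E a c) * g b c ∂μ
      = (if b = c then (1:ℝ) else 0) * g b c := by
    intro c
    rw [integral_mul_const, hcov a b a c]
    simp
  simp only [h1, ite_mul, one_mul, zero_mul, Finset.sum_ite_eq]
  simp

end Integrals
end RMP

namespace RMP

section Main

variable {d k : ℕ}

/-- first-order perturbation matrix entries -/
noncomputable def AM (v : Fin k → Fin d → ℝ) (E : Matrix (Fin d) (Fin d) ℝ) (i j : Fin k) : ℝ :=
  (E *ᵥ v i) ⬝ᵥ v j + v i ⬝ᵥ (E *ᵥ v j)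

/-- second-order perturbation matrix entries -/
noncomputable def BM (v : Fin k → Fin d → ℝ) (E : Matrix (Fin d) (Fin d) ℝ) (i j : Fin k) : ℝ :=
  (E *ᵥ v i) ⬝ᵥ (E *ᵥ v j)

/-- the perturbation of the Gram matrix -/
noncomputable def HM (ε : ℝ) (v : Fin k → Fin d → ℝ) (E : Matrix (Fin d) (Fin d) ℝ) :
    Matrix (Fin k) (Fin k) ℝ :=
  Matrix.of fun i j => ε * AM v E i j + ε^2 * BM v E i j

/-- the quadratic approximation of the log-det -/
noncomputable def PM (ε : ℝ) (v : Fin k → Fin d → ℝ) (E : Matrix (Fin d) (Fin d) ℝ) : ℝ :=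
  (1/2)*ε*(∑ i, AM v E i i) + (1/2)*ε^2*(∑ i, BM v E i i)
    - (1/4)*ε^2*(∑ i, ∑ j, AM v E i j * AM v E i j)

lemma AM_symm (v : Fin k → Fin d → ℝ) (E : Matrix (Fin d) (Fin d) ℝ) (i j : Fin k) :
    AM v E j i = AM v E i j := by
  unfold AM
  rw [dotProduct_comm, dotProduct_comm (v j), add_comm]

lemma BM_symm (v : Fin k → Fin d → ℝ) (E : Matrix (Fin d) (Fin d) ℝ) (i j : Fin k) :
    BM v E j i = BM v E i j := by
  unfold BM; rw [dotProduct_comm]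

lemma HM_isHermitian (ε : ℝ) (v : Fin k → Fin d → ℝ) (E : Matrix (Fin d) (Fin d) ℝ) :
    (HM ε v E).IsHermitian := by
  rw [Matrix.IsHermitian]
  ext i j
  simp only [Matrix.conjTranspose_apply, HM, Matrix.of_apply, star_trivial]
  rw [AM_symm, BM_symm]

lemma GM_eq (ε : ℝ) (v : Fin k → Fin d → ℝ)
    (hv : ∀ i j : Fin k, v i ⬝ᵥ v j = if i = j then 1 else 0)
    (E : Matrix (Fin d) (Fin d) ℝ) :
    (Matrix.of fun i j : Fin k =>
        (((1 : Matrix (Fin d) (Fin d) ℝ) + ε • E).mulVec (v i)) ⬝ᵥ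
        (((1 : Matrix (Fin d) (Fin d) ℝ) + ε • E).mulVec (v j)))
      = 1 + HM ε v E := by
  ext i j
  have expand : ∀ x y : Fin d → ℝ,
      (((1 : Matrix (Fin d) (Fin d) ℝ) + ε • E) *ᵥ x) ⬝ᵥ
        (((1 : Matrix (Fin d) (Fin d) ℝ) + ε • E) *ᵥ y)
      = x ⬝ᵥ y + (ε * ((E *ᵥ x) ⬝ᵥ y + x ⬝ᵥ (E *ᵥ y)) + ε^2 * ((E *ᵥ x) ⬝ᵥ (E *ᵥ y))) := by
    intro x y
    rw [Matrix.add_mulVec, Matrix.one_mulVec, Matrix.smul_mulVec,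
      Matrix.add_mulVec, Matrix.one_mulVec, Matrix.smul_mulVec]
    simp only [add_dotProduct, dotProduct_add, smul_dotProduct, dotProduct_smul,
      smul_eq_mul]
    ring
  simp only [Matrix.of_apply, Matrix.add_apply, Matrix.one_apply, HM, AM, BM]
  rw [expand (v i) (v j), hv i j]

lemma HM_trace (ε : ℝ) (v : Fin k → Fin d → ℝ) (E : Matrix (Fin d) (Fin d) ℝ) :
    (HM ε v E).trace = ε * (∑ i, AM v E i i) + ε^2 * (∑ i, BM v E i i) := by
  simp only [Matrix.trace, Matrix.diag, HM, Matrix.of_apply, Finset.sum_add_distrib,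
    Finset.mul_sum]

lemma HM_sq_trace (ε : ℝ) (v : Fin k → Fin d → ℝ) (E : Matrix (Fin d) (Fin d) ℝ) :
    (HM ε v E * HM ε v E).trace = ∑ i, ∑ j, HM ε v E i j * HM ε v E j i := by
  simp only [Matrix.trace, Matrix.diag, Matrix.mul_apply]

end Main
end RMP

namespace RMP

section Det

variable {d k : ℕ} {L ε : ℝ} {v : Fin k → Fin d → ℝ} {E : Matrix (Fin d) (Fin d) ℝ}

lemma AM_bound (hE : opNorm E ≤ L) (hvu : ∀ i : Fin k, v i ⬝ᵥ v i = 1) (i j : Fin k) :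
    |AM v E i j| ≤ 2*L := by
  unfold AM
  calc |(E *ᵥ v i) ⬝ᵥ v j + v i ⬝ᵥ (E *ᵥ v j)|
      ≤ |(E *ᵥ v i) ⬝ᵥ v j| + |v i ⬝ᵥ (E *ᵥ v j)| := abs_add_le _ _
    _ ≤ L + L := by
        apply add_le_add (dot_mulVec_bound hE (hvu i) (hvu j))
        rw [dotProduct_comm]
        exact dot_mulVec_bound hE (hvu j) (hvu i)
    _ = 2*L := by ring

lemma BM_bound (hE : opNorm E ≤ L) (hL0 : 0 ≤ L) (hvu : ∀ i : Fin k, v i ⬝ᵥ v i = 1)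
    (i j : Fin k) : |BM v E i j| ≤ L^2 :=
  dot_mulVec_mulVec_bound hE hL0 (hvu i) (hvu j)

lemma HM_entry_bound (hE : opNorm E ≤ L) (hL0 : 0 ≤ L) (hvu : ∀ i : Fin k, v i ⬝ᵥ v i = 1)
    (hε : 0 < ε) (hε1 : ε ≤ 1) (i j : Fin k) :
    |HM ε v E i j| ≤ ε*(2*L+L^2) := by
  have hA := AM_bound hE hvu i j
  have hB := BM_bound hE hL0 hvu i j
  have : HM ε v E i j = ε * AM v E i j + ε^2 * BM v E i j := rfl
  rw [this]
  calc |ε * AM v E i j + ε^2 * BM v E i j|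
      ≤ |ε * AM v E i j| + |ε^2 * BM v E i j| := abs_add_le _ _
    _ = ε * |AM v E i j| + ε^2 * |BM v E i j| := by
        rw [abs_mul, abs_mul, abs_of_pos hε, abs_of_pos (pow_pos hε 2)]
    _ ≤ ε*(2*L) + ε^2*(L^2) := by
        apply add_le_add (mul_le_mul_of_nonneg_left hA hε.le)
          (mul_le_mul_of_nonneg_left hB (pow_nonneg hε.le 2))
    _ ≤ ε*(2*L+L^2) := by
        nlinarith [mul_nonneg (mul_nonneg hε.le (sq_nonneg L)) (sub_nonneg.2 hε1)]

lemma HM_sq_trace_bound (hE : opNorm E ≤ L) (hL0 : 0 ≤ L)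
    (hvu : ∀ i : Fin k, v i ⬝ᵥ v i = 1) (hε : 0 < ε) (hε1 : ε ≤ 1) :
    (HM ε v E * HM ε v E).trace ≤ ((k:ℝ)*(ε*(2*L+L^2)))^2 := by
  rw [HM_sq_trace]
  have hterm : ∀ i j : Fin k, HM ε v E i j * HM ε v E j i ≤ (ε*(2*L+L^2))^2 := by
    intro i j
    have h1 := HM_entry_bound hE hL0 hvu hε hε1 i j
    have h2 := HM_entry_bound hE hL0 hvu hε hε1 j i
    calc HM ε v E i j * HM ε v E j i ≤ |HM ε v E i j * HM ε v E j i| := le_abs_self _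
      _ = |HM ε v E i j| * |HM ε v E j i| := abs_mul _ _
      _ ≤ (ε*(2*L+L^2)) * (ε*(2*L+L^2)) :=
          mul_le_mul h1 h2 (abs_nonneg _) (le_trans (abs_nonneg _) h1)
      _ = (ε*(2*L+L^2))^2 := (sq _).symm
  calc (∑ i, ∑ j, HM ε v E i j * HM ε v E j i)
      ≤ ∑ _i : Fin k, ∑ _j : Fin k, (ε*(2*L+L^2))^2 :=
        Finset.sum_le_sum fun i _ => Finset.sum_le_sum fun j _ => hterm i j
    _ = ((k:ℝ)*(ε*(2*L+L^2)))^2 := by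
        simp [Finset.sum_const]; ring

lemma pointwise_est (hE : opNorm E ≤ L) (hL : 0 < L)
    (hvu : ∀ i : Fin k, v i ⬝ᵥ v i = 1) (hε : 0 < ε) (hε1 : ε ≤ 1)
    (hhalf : (k:ℝ)*(ε*(2*L+L^2)) ≤ 1/2) :
    |(1/2) * Real.log ((1 + HM ε v E).det) - PM ε v E|
      ≤ ((k:ℝ)^4*(2*L+L^2)^3 + (k:ℝ)^2*(4*L^3+L^4)) * ε^3 := by
  have hL0 : (0:ℝ) ≤ L := hL.le
  have hδ0 : (0:ℝ) ≤ (k:ℝ)*(ε*(2*L+L^2)) := by positivity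
  have hlog := logdet_taylor (HM_isHermitian ε v E) hδ0 hhalf
    (HM_sq_trace_bound hE hL0 hvu hε hε1)
  -- remainder of the trace of H² vs ε² ∑ A²
  have hrem : |(HM ε v E * HM ε v E).trace - ε^2 * (∑ i, ∑ j, AM v E i j * AM v E i j)|
      ≤ (k:ℝ)^2*(4*L^3+L^4)*ε^3 := by
    rw [HM_sq_trace]
    have he : (∑ i, ∑ j, HM ε v E i j * HM ε v E j i)
        - ε^2 * (∑ i, ∑ j, AM v E i j * AM v E i j)
        = ∑ i, ∑ j, (HM ε v E i j * HM ε v E j i - ε^2 * (AM v E i j * AM v E i j)) := by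
      rw [Finset.mul_sum, ← Finset.sum_sub_distrib]
      apply Finset.sum_congr rfl; intro i _
      rw [Finset.mul_sum, ← Finset.sum_sub_distrib]
    rw [he]
    have hterm : ∀ i j : Fin k,
        |HM ε v E i j * HM ε v E j i - ε^2 * (AM v E i j * AM v E i j)|
        ≤ (4*L^3+L^4)*ε^3 := by
      intro i j
      have hHij : HM ε v E i j = ε * AM v E i j + ε^2 * BM v E i j := rfl
      have hHji : HM ε v E j i = ε * AM v E i j + ε^2 * BM v E i j := by
        show ε * AM v E j i + ε^2 * BM v E j i = _
        rw [AM_symm, BM_symm]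
      rw [hHij, hHji]
      have hr : (ε * AM v E i j + ε^2 * BM v E i j) * (ε * AM v E i j + ε^2 * BM v E i j)
          - ε^2 * (AM v E i j * AM v E i j)
          = ε^3 * (2 * (AM v E i j * BM v E i j)) + ε^4 * (BM v E i j * BM v E i j) := by
        ring
      rw [hr]
      have ha := AM_bound hE hvu i j
      have hb := BM_bound hE hL0 hvu i j
      have hab : |AM v E i j * BM v E i j| ≤ 2*L*L^2 := by
        rw [abs_mul]
        exact mul_le_mul ha hb (abs_nonneg _) (by positivity)
      have hbb : |BM v E i j * BM v E i j| ≤ L^2*L^2 := by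
        rw [abs_mul]
        exact mul_le_mul hb hb (abs_nonneg _) (by positivity)
      have h4 : ε^4 ≤ ε^3 := by nlinarith [pow_pos hε 3]
      calc |ε^3 * (2 * (AM v E i j * BM v E i j)) + ε^4 * (BM v E i j * BM v E i j)|
          ≤ |ε^3 * (2 * (AM v E i j * BM v E i j))| + |ε^4 * (BM v E i j * BM v E i j)| :=
            abs_add_le _ _
        _ = ε^3 * (|2| * |AM v E i j * BM v E i j|) + ε^4 * |BM v E i j * BM v E i j| := by
            rw [abs_mul (ε^3) (2 * (AM v E i j * BM v E i j)),
              abs_mul (ε^4) (BM v E i j * BM v E i j),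
              abs_mul (2:ℝ) (AM v E i j * BM v E i j),
              abs_of_pos (pow_pos hε 3), abs_of_pos (pow_pos hε 4)]
        _ = ε^3 * (2 * |AM v E i j * BM v E i j|) + ε^4 * |BM v E i j * BM v E i j| := by
            norm_num
        _ ≤ ε^3 * (2 * (2*L*L^2)) + ε^3 * (L^2*L^2) := by
            have t1 : ε^3 * (2 * |AM v E i j * BM v E i j|) ≤ ε^3 * (2 * (2*L*L^2)) := by
              apply mul_le_mul_of_nonneg_left _ (pow_nonneg hε.le 3)
              linarith
            have t2 : ε^4 * |BM v E i j * BM v E i j| ≤ ε^3 * (L^2*L^2) := by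
              calc ε^4 * |BM v E i j * BM v E i j| ≤ ε^4 * (L^2*L^2) :=
                    mul_le_mul_of_nonneg_left hbb (pow_nonneg hε.le 4)
                _ ≤ ε^3 * (L^2*L^2) :=
                    mul_le_mul_of_nonneg_right h4 (by positivity)
            linarith
        _ = (4*L^3+L^4)*ε^3 := by ring
    calc |∑ i, ∑ j, (HM ε v E i j * HM ε v E j i - ε^2 * (AM v E i j * AM v E i j))|
        ≤ ∑ i, |∑ j, (HM ε v E i j * HM ε v E j i - ε^2 * (AM v E i j * AM v E i j))| :=
          Finset.abs_sum_le_sum_abs _ _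
      _ ≤ ∑ _i : Fin k, ∑ _j : Fin k, (4*L^3+L^4)*ε^3 := by
          apply Finset.sum_le_sum; intro i _
          calc |∑ j, (HM ε v E i j * HM ε v E j i - ε^2 * (AM v E i j * AM v E i j))|
              ≤ ∑ j, |HM ε v E i j * HM ε v E j i - ε^2 * (AM v E i j * AM v E i j)| :=
                Finset.abs_sum_le_sum_abs _ _
            _ ≤ ∑ _j : Fin k, (4*L^3+L^4)*ε^3 :=
                Finset.sum_le_sum fun j _ => hterm i j
      _ = (k:ℝ)^2*(4*L^3+L^4)*ε^3 := by
          simp [Finset.sum_const]; ring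
  -- combine
  have hPe : PM ε v E = (1/2) * (HM ε v E).trace
      - (1/4) * (ε^2 * (∑ i, ∑ j, AM v E i j * AM v E i j)) := by
    rw [HM_trace]; unfold PM; ring
  have hkey : (1/2) * Real.log ((1 + HM ε v E).det) - PM ε v E
      = (1/2) * (Real.log ((1 + HM ε v E).det) - (HM ε v E).trace
          + (HM ε v E * HM ε v E).trace / 2)
        - (1/4) * ((HM ε v E * HM ε v E).trace
          - ε^2 * (∑ i, ∑ j, AM v E i j * AM v E i j)) := by
    rw [hPe]; ring
  rw [hkey]
  have h1 : |(1/2) * (Real.log ((1 + HM ε v E).det) - (HM ε v E).trace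
      + (HM ε v E * HM ε v E).trace / 2)| ≤ (k:ℝ)^4*(2*L+L^2)^3*ε^3 := by
    rw [abs_mul, abs_of_pos (by norm_num : (0:ℝ) < 1/2)]
    have : 2*(k:ℝ)*((k:ℝ)*(ε*(2*L+L^2)))^3 = 2*((k:ℝ)^4*(2*L+L^2)^3*ε^3) := by ring
    rw [this] at hlog
    linarith
  have h2 : |(1/4) * ((HM ε v E * HM ε v E).trace
      - ε^2 * (∑ i, ∑ j, AM v E i j * AM v E i j))| ≤ (k:ℝ)^2*(4*L^3+L^4)*ε^3 := by
    rw [abs_mul, abs_of_pos (by norm_num : (0:ℝ) < 1/4)]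
    linarith [abs_nonneg ((HM ε v E * HM ε v E).trace
      - ε^2 * (∑ i, ∑ j, AM v E i j * AM v E i j))]
  calc |(1/2) * (Real.log ((1 + HM ε v E).det) - (HM ε v E).trace
        + (HM ε v E * HM ε v E).trace / 2)
      - (1/4) * ((HM ε v E * HM ε v E).trace
        - ε^2 * (∑ i, ∑ j, AM v E i j * AM v E i j))| ≤ _ + _ := abs_sub _ _
    _ ≤ ((k:ℝ)^4*(2*L+L^2)^3 + (k:ℝ)^2*(4*L^3+L^4)) * ε^3 := by
        have := h1; have := h2; ring_nf; ring_nf at h1 h2 ⊢; linarith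

end Det
end RMP

namespace RMP

section Prob

variable {d k : ℕ} {μ : Measure (Matrix (Fin d) (Fin d) ℝ)} {v : Fin k → Fin d → ℝ} {ε : ℝ}
variable (hμ : IsProbabilityMeasure μ)
variable (hcov : ∀ i j k l : Fin d, ∫ E, E i j * E k l ∂μ = if i = k ∧ j = l then 1 else 0)

lemma AM_fun_eq (v : Fin k → Fin d → ℝ) (i j : Fin k) :
    (fun E : Matrix (Fin d) (Fin d) ℝ => AM v E i j)
    = fun E => ∑ a, ∑ b, E a b * (v i b * v j a + v j b * v i a) :=
  funext fun E => AA_eq (v i) (v j) E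

lemma BM_fun_eq (v : Fin k → Fin d → ℝ) (i j : Fin k) :
    (fun E : Matrix (Fin d) (Fin d) ℝ => BM v E i j)
    = fun E => ∑ a, ∑ b, ∑ c, (E a b * E a c) * (v i b * v j c) :=
  funext fun E => BB_eq (v i) (v j) E

lemma AMsq_fun_eq (v : Fin k → Fin d → ℝ) (i j : Fin k) :
    (fun E : Matrix (Fin d) (Fin d) ℝ => AM v E i j * AM v E i j)
    = fun E => ∑ a, ∑ b, ∑ c, ∑ e, (E a b * E c e) *
        ((v i b * v j a + v j b * v i a) * (v i e * v j c + v j e * v i c)) := by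
  funext E
  rw [show AM v E i j = ∑ a, ∑ b, E a b * (v i b * v j a + v j b * v i a) from
    AA_eq (v i) (v j) E]
  exact lin_mul_lin _ _ E

include hμ hcov

lemma intg_AM (i j : Fin k) :
    Integrable (fun E : Matrix (Fin d) (Fin d) ℝ => AM v E i j) μ := by
  rw [AM_fun_eq]; exact intg_lin hμ hcov _

lemma integral_AM (hmean : ∀ i j : Fin d, ∫ E, E i j ∂μ = 0) (i j : Fin k) :
    ∫ E, AM v E i j ∂μ = 0 := by
  rw [AM_fun_eq]; exact integral_lin hμ hcov hmean _

lemma intg_BM (i j : Fin k) :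
    Integrable (fun E : Matrix (Fin d) (Fin d) ℝ => BM v E i j) μ := by
  rw [BM_fun_eq]; exact intg_quadB hμ hcov _

lemma integral_BM_diag (hvu : ∀ i : Fin k, v i ⬝ᵥ v i = 1) (i : Fin k) :
    ∫ E, BM v E i i ∂μ = (d : ℝ) := by
  rw [BM_fun_eq, integral_quadB hμ hcov]
  have h1 : (∑ b, v i b * v i b) = 1 := hvu i
  simp [h1]

lemma intg_AMsq (i j : Fin k) :
    Integrable (fun E : Matrix (Fin d) (Fin d) ℝ => AM v E i j * AM v E i j) μ := by
  rw [AMsq_fun_eq]; exact intg_quad2 hμ hcov _ _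

lemma integral_AMsq (hv : ∀ i j : Fin k, v i ⬝ᵥ v j = if i = j then 1 else 0) (i j : Fin k) :
    ∫ E, AM v E i j * AM v E i j ∂μ = 2 + 2*(if i = j then 1 else 0) := by
  rw [AMsq_fun_eq, integral_quad2 hμ hcov]
  rw [sum_w_sq (v i) (v j)]
  have h1 : v i ⬝ᵥ v i = 1 := by simpa using hv i i
  have h2 : v j ⬝ᵥ v j = 1 := by simpa using hv j j
  rw [h1, h2, hv i j]
  by_cases h : i = j <;> simp [h] <;> norm_num

lemma intg_PM :
    Integrable (fun E : Matrix (Fin d) (Fin d) ℝ => PM ε v E) μ := by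
  unfold PM
  apply Integrable.sub
  · apply Integrable.add
    · exact (integrable_finset_sum _ (fun i _ => intg_AM hμ hcov i i)).const_mul _
    · exact (integrable_finset_sum _ (fun i _ => intg_BM hμ hcov i i)).const_mul _
  · exact (integrable_finset_sum _ (fun i _ =>
      integrable_finset_sum _ (fun j _ => intg_AMsq hμ hcov i j))).const_mul _

lemma integral_PM (hmean : ∀ i j : Fin d, ∫ E, E i j ∂μ = 0)
    (hv : ∀ i j : Fin k, v i ⬝ᵥ v j = if i = j then 1 else 0) :
    ∫ E, PM ε v E ∂μ = (k:ℝ)*((d:ℝ)-(k:ℝ)-1)*ε^2/2 := by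
  have hvu : ∀ i : Fin k, v i ⬝ᵥ v i = 1 := fun i => by simpa using hv i i
  have I1 : Integrable (fun E : Matrix (Fin d) (Fin d) ℝ => ∑ i, AM v E i i) μ :=
    integrable_finset_sum _ (fun i _ => intg_AM hμ hcov i i)
  have I2 : Integrable (fun E : Matrix (Fin d) (Fin d) ℝ => ∑ i, BM v E i i) μ :=
    integrable_finset_sum _ (fun i _ => intg_BM hμ hcov i i)
  have I3 : Integrable (fun E : Matrix (Fin d) (Fin d) ℝ =>
      ∑ i, ∑ j, AM v E i j * AM v E i j) μ :=
    integrable_finset_sum _ (fun i _ =>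
      integrable_finset_sum _ (fun j _ => intg_AMsq hμ hcov i j))
  have V1 : ∫ E, (∑ i, AM v E i i) ∂μ = 0 := by
    rw [integral_finset_sum _ (fun i _ => intg_AM hμ hcov i i)]
    exact Finset.sum_eq_zero fun i _ => integral_AM hμ hcov hmean i i
  have V2 : ∫ E, (∑ i, BM v E i i) ∂μ = (k:ℝ)*(d:ℝ) := by
    rw [integral_finset_sum _ (fun i _ => intg_BM hμ hcov i i)]
    rw [Finset.sum_congr rfl (fun i _ => integral_BM_diag hμ hcov hvu i)]
    simp [Finset.sum_const]
  have V3 : ∫ E, (∑ i, ∑ j, AM v E i j * AM v E i j) ∂μ = 2*(k:ℝ)^2 + 2*(k:ℝ) := by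
    rw [integral_finset_sum _ (fun i _ =>
      integrable_finset_sum _ (fun j _ => intg_AMsq hμ hcov i j))]
    rw [Finset.sum_congr rfl (fun i _ => integral_finset_sum _
      (fun j _ => intg_AMsq hμ hcov i j))]
    rw [Finset.sum_congr rfl (fun i _ => Finset.sum_congr rfl
      (fun j _ => integral_AMsq hμ hcov hv i j))]
    simp [Finset.sum_add_distrib, Finset.sum_ite_eq, Finset.sum_const, Finset.mul_sum]
    ring
  have Ia : Integrable (fun E : Matrix (Fin d) (Fin d) ℝ =>
      1/2*ε*(∑ i, AM v E i i) + 1/2*ε^2*(∑ i, BM v E i i)) μ :=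
    (I1.const_mul _).add (I2.const_mul _)
  have Ib : Integrable (fun E : Matrix (Fin d) (Fin d) ℝ =>
      1/4*ε^2*(∑ i, ∑ j, AM v E i j * AM v E i j)) μ := I3.const_mul _
  have Ic : Integrable (fun E : Matrix (Fin d) (Fin d) ℝ =>
      1/2*ε*(∑ i, AM v E i i)) μ := I1.const_mul _
  have Id : Integrable (fun E : Matrix (Fin d) (Fin d) ℝ =>
      1/2*ε^2*(∑ i, BM v E i i)) μ := I2.const_mul _
  unfold PM
  rw [integral_sub Ia Ib, integral_add Ic Id,
    integral_const_mul, integral_const_mul, integral_const_mul, V1, V2, V3]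
  ring

end Prob
end RMP

namespace RMP

lemma meas_phi {d k : ℕ} (ε : ℝ) (v : Fin k → Fin d → ℝ) :
    Measurable (fun E : Matrix (Fin d) (Fin d) ℝ => (1 / 2) * Real.log
      (Matrix.det (Matrix.of fun i j : Fin k =>
        (((1 : Matrix (Fin d) (Fin d) ℝ) + ε • E).mulVec (v i)) ⬝ᵥ
        (((1 : Matrix (Fin d) (Fin d) ℝ) + ε • E).mulVec (v j))))) := by
  have hc1 : Continuous (fun E : Matrix (Fin d) (Fin d) ℝ =>
      (1 : Matrix (Fin d) (Fin d) ℝ) + ε • E) :=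
    continuous_const.add (continuous_id.const_smul ε)
  have hc : Continuous (fun E : Matrix (Fin d) (Fin d) ℝ =>
      (Matrix.of fun i j : Fin k =>
        (((1 : Matrix (Fin d) (Fin d) ℝ) + ε • E).mulVec (v i)) ⬝ᵥ
        (((1 : Matrix (Fin d) (Fin d) ℝ) + ε • E).mulVec (v j)))) := by
    apply continuous_matrix
    intro i j
    exact Continuous.dotProduct (hc1.matrix_mulVec continuous_const)
      (hc1.matrix_mulVec continuous_const)
  exact (Real.measurable_log.comp hc.matrix_det.measurable).const_mul _

end RMP


/-- For `μ ∈ 𝓜_L` and any orthonormal family `v₁, …, v_k` in `ℝ^d`, the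
expected log-volume distortion `∫ (1/2) log det G_ε(E) dμ(E) = k(d−k−1)ε²/2 + O(ε³)`
uniformly in the orthonormal family, where `G_ε(E)` is the Gram matrix of the vectors
`(I + εE)v₁, …, (I + εE)v_k`. -/
theorem stmt8 (d k : ℕ) (hd : 1 ≤ d) (hk : 1 ≤ k) (hkd : k ≤ d) (L : ℝ) (hL : 0 < L) :
    ∃ C : ℝ, 0 < C ∧ ∃ ε₀ : ℝ, 0 < ε₀ ∧
      ∀ μ : Measure (Matrix (Fin d) (Fin d) ℝ), RMP.memML d L μ →
      ∀ v : Fin k → (Fin d → ℝ),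
        (∀ i j : Fin k, v i ⬝ᵥ v j = if i = j then 1 else 0) →
      ∀ ε : ℝ, 0 < ε → ε < ε₀ →
        |(∫ (E : Matrix (Fin d) (Fin d) ℝ), (1 / 2) * Real.log
              (Matrix.det (Matrix.of fun i j : Fin k =>
                (((1 : Matrix (Fin d) (Fin d) ℝ) + ε • E).mulVec (v i)) ⬝ᵥ
                (((1 : Matrix (Fin d) (Fin d) ℝ) + ε • E).mulVec (v j)))) ∂μ) -
            (k : ℝ) * ((d : ℝ) - k - 1) * ε ^ 2 / 2| ≤ C * ε ^ 3 := by
  have hL0 : (0:ℝ) ≤ L := hL.le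
  have hkpos : (0:ℝ) < (k:ℝ) := by exact_mod_cast hk
  set c₀ : ℝ := 2*L + L^2 with hc0
  have hc₀ : (0:ℝ) < c₀ := by rw [hc0]; nlinarith [sq_nonneg L]
  set C₀ : ℝ := (k:ℝ)^4*c₀^3 + (k:ℝ)^2*(4*L^3+L^4) with hC0
  have hC₀pos : (0:ℝ) < C₀ := by
    rw [hC0]
    nlinarith [mul_pos (pow_pos hkpos 4) (pow_pos hc₀ 3),
      mul_pos (pow_pos hkpos 2)
        (by nlinarith [pow_pos hL 3, pow_pos hL 4] : (0:ℝ) < 4*L^3+L^4)]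
  have hden : (0:ℝ) < 2*(k:ℝ)*c₀+1 := by
    nlinarith [mul_pos (mul_pos (by norm_num : (0:ℝ) < 2) hkpos) hc₀]
  refine ⟨C₀, hC₀pos, 1/(2*(k:ℝ)*c₀+1), by positivity, ?_⟩
  intro μ hm v hv ε hε hεlt
  obtain ⟨hprob, hsupp, hmean, hcov⟩ := hm
  haveI := hprob
  have hvu : ∀ i : Fin k, v i ⬝ᵥ v i = 1 := fun i => by simpa using hv i i
  have hε1 : ε ≤ 1 := by
    have h2 : 1/(2*(k:ℝ)*c₀+1) ≤ 1 := by
      rw [div_le_one hden]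
      nlinarith [mul_pos (mul_pos (by norm_num : (0:ℝ) < 2) hkpos) hc₀]
    linarith
  have hhalf : (k:ℝ)*(ε*c₀) ≤ 1/2 := by
    rw [lt_div_iff₀ hden] at hεlt
    nlinarith [mul_pos hkpos hc₀]
  set φ := fun E : Matrix (Fin d) (Fin d) ℝ => (1 / 2) * Real.log
              (Matrix.det (Matrix.of fun i j : Fin k =>
                (((1 : Matrix (Fin d) (Fin d) ℝ) + ε • E).mulVec (v i)) ⬝ᵥ
                (((1 : Matrix (Fin d) (Fin d) ℝ) + ε • E).mulVec (v j)))) with hφ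
  have hφmeas : Measurable φ := RMP.meas_phi ε v
  have hφP : ∀ E : Matrix (Fin d) (Fin d) ℝ, RMP.opNorm E ≤ L →
      |φ E - RMP.PM ε v E| ≤ C₀ * ε^3 := by
    intro E hE
    have hpt := RMP.pointwise_est hE hL hvu hε hε1 hhalf
    simp only [hφ]
    rw [RMP.GM_eq ε v hv E]
    rw [hC0]
    exact hpt
  have hae : ∀ᵐ E ∂μ, RMP.opNorm E ≤ L := RMP.ae_opNorm hprob hsupp
  have haeb : ∀ᵐ E ∂μ, ‖φ E - RMP.PM ε v E‖ ≤ C₀*ε^3 :=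
    hae.mono (fun E hE => by rw [Real.norm_eq_abs]; exact hφP E hE)
  have hIP : Integrable (fun E => RMP.PM ε v E) μ := RMP.intg_PM hprob hcov
  have hErr : Integrable (fun E => φ E - RMP.PM ε v E) μ := by
    apply Integrable.mono' (integrable_const (C₀*ε^3))
    · exact hφmeas.aestronglyMeasurable.sub hIP.aestronglyMeasurable
    · exact haeb
  have hIφ : Integrable φ μ := by
    have h := hErr.add hIP
    have e : ((fun E => φ E - RMP.PM ε v E) + fun E => RMP.PM ε v E) = φ := by
      funext E; simp only [Pi.add_apply]; ring
    rwa [e] at h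
  have hsplit : ∫ E, φ E ∂μ - ∫ E, RMP.PM ε v E ∂μ
      = ∫ E, (φ E - RMP.PM ε v E) ∂μ := (integral_sub hIφ hIP).symm
  have hPMval : ∫ E, RMP.PM ε v E ∂μ = (k:ℝ)*((d:ℝ)-(k:ℝ)-1)*ε^2/2 :=
    RMP.integral_PM hprob hcov hmean hv
  have hbound : |∫ E, (φ E - RMP.PM ε v E) ∂μ| ≤ C₀*ε^3 := by
    have h := norm_integral_le_of_norm_le_const haeb
    simpa [Real.norm_eq_abs, measure_univ] using h
  calc |(∫ E, φ E ∂μ) - (k : ℝ) * ((d : ℝ) - k - 1) * ε ^ 2 / 2|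
      = |∫ E, (φ E - RMP.PM ε v E) ∂μ| := by rw [← hPMval, hsplit]
    _ ≤ C₀ * ε^3 := hbound
end
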